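/- arXiv:1809.06829 — 3 statements merged into one kernel-verified Lean document; each statement's English description precedes it below -/
import Mathlib

section
/- Let X be a metric space, A ⊂ ℝ^{n+m} a measurable set of positive Lebesgue measure, and f : A → X a Lipschitz map. If the upper n-density Θ^{*n}(f,x) > 0 on a subset of A of positive Lebesgue measure, then ℋ^n(f(A)) > 0, where ℋ^n denotes the n-dimensional Hausdorff measure on X. -/
open MeasureTheory Metric Set Filter
open scoped ENNReal NNReal Topology

noncomputable section

abbrev EucSp (k : ℕ) := EuclideanSpace ℝ (Fin k)

/-- The volume of the unit ball in `ℝ^n`. -/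
def unitBallVol (n : ℕ) : ℝ≥0∞ := volume (Metric.ball (0 : EucSp n) 1)

/-- The `n`-dimensional Hausdorff content. -/
def hContent {X : Type*} [PseudoEMetricSpace X] (n : ℕ) (E : Set X) : ℝ≥0∞ :=
  ⨅ (A : ℕ → Set X) (_ : E ⊆ ⋃ i, A i),
    unitBallVol n / 2 ^ n * ∑' i, EMetric.diam (A i) ^ n

/-- Upper n-density. -/
def upperDensity {k : ℕ} {X : Type*} [PseudoEMetricSpace X] (n : ℕ)
    (f : EucSp k → X) (A : Set (EucSp k)) (x : EucSp k) : ℝ≥0∞ :=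
  Filter.limsup
    (fun r : ℝ => hContent n (f '' (Metric.ball x r ∩ A)) /
      (unitBallVol n * ENNReal.ofReal r ^ n)) (𝓝[>] (0:ℝ))

def lowerDensity {k : ℕ} {X : Type*} [PseudoEMetricSpace X] (n : ℕ)
    (f : EucSp k → X) (A : Set (EucSp k)) (x : EucSp k) : ℝ≥0∞ :=
  Filter.liminf
    (fun r : ℝ => hContent n (f '' (Metric.ball x r ∩ A)) /
      (unitBallVol n * ENNReal.ofReal r ^ n)) (𝓝[>] (0:ℝ))

def IsDensityPoint {k : ℕ} (E : Set (EucSp k)) (x : EucSp k) : Prop :=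
  Filter.Tendsto (fun r : ℝ => volume (E ∩ Metric.ball x r) / volume (Metric.ball x r))
    (𝓝[>] (0:ℝ)) (𝓝 1)

def HasApproxDerivWithinAt {k : ℕ} (A : Set (EucSp k)) (f : EucSp k → ℝ)
    (L : EucSp k →ₗ[ℝ] ℝ) (x : EucSp k) : Prop :=
  ∃ Ax : Set (EucSp k), Ax ⊆ A ∧ MeasurableSet Ax ∧ IsDensityPoint Ax x ∧
    Filter.Tendsto (fun y => |f y - f x - L (y - x)| / ‖y - x‖) (𝓝[Ax] x) (𝓝 0)

abbrev LpInfty := lp (fun _ : ℕ => ℝ) ∞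

def HasCompApproxDerivWithinAt {k : ℕ} (A : Set (EucSp k)) (f : EucSp k → LpInfty)
    (D : EucSp k →ₗ[ℝ] (ℕ → ℝ)) (x : EucSp k) : Prop :=
  ∀ i : ℕ, HasApproxDerivWithinAt A (fun y => f y i) ((LinearMap.proj i).comp D) x

def IsBiLipC1DiffeoOn {k : ℕ} (G Ginv : EucSp k → EucSp k) (U : Set (EucSp k)) : Prop :=
  IsOpen U ∧ IsOpen (G '' U) ∧ (∀ x ∈ U, Ginv (G x) = x) ∧ (∀ y ∈ G '' U, G (Ginv y) = y) ∧
    ContDiffOn ℝ 1 G U ∧ ContDiffOn ℝ 1 Ginv (G '' U) ∧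
    ∃ Λ : ℝ≥0, LipschitzOnWith Λ G U ∧ LipschitzOnWith Λ Ginv (G '' U)

def IsFinCoordPerm (Ψ : LpInfty → LpInfty) : Prop :=
  ∃ σ : Equiv.Perm ℕ, {i | σ i ≠ i}.Finite ∧ ∀ (x : LpInfty) (i : ℕ), Ψ x i = x (σ i)

def openCube {k : ℕ} (c : EucSp k) (d : ℝ) : Set (EucSp k) := {x | ∀ i, |x i - c i| < d / 2}

def closedCube {k : ℕ} (c : EucSp k) (d : ℝ) : Set (EucSp k) := {x | ∀ i, |x i - c i| ≤ d / 2}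

def hnmContent {N : ℕ} {X : Type*} [PseudoEMetricSpace X] (n m : ℕ)
    (f : EucSp N → X) (Q : Set (EucSp N)) : ℝ≥0∞ :=
  ⨅ (c : ℕ → EucSp N) (d : ℕ → ℝ) (_ : ∀ j, 0 ≤ d j) (_ : ∀ j, openCube (c j) (d j) ⊆ Q)
    (_ : Pairwise (Function.onFun Disjoint fun j => openCube (c j) (d j)))
    (_ : volume (Q \ ⋃ j, openCube (c j) (d j)) = 0),
    ∑' j, hContent n (f '' openCube (c j) (d j)) * ENNReal.ofReal (d j) ^ m

def matrixRow {n k : ℕ} (D : Matrix (Fin n) (Fin k) ℝ) (i : Fin n) : EucSp k →ₗ[ℝ] ℝ :=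
  (EuclideanSpace.proj i).toLinearMap.comp (Matrix.toEuclideanLin D)

def jacDet {n k : ℕ} (D : Matrix (Fin n) (Fin k) ℝ) : ℝ := Real.sqrt ((D * D.transpose).det)

def upperLintegral {Y : Type*} [MeasurableSpace Y] (μ : Measure Y) (g : Y → ℝ≥0∞) : ℝ≥0∞ :=
  ⨅ (h : Y → ℝ≥0∞) (_ : Measurable h) (_ : ∀ y, g y ≤ h y), ∫⁻ y, h y ∂μ


lemma hContent_eq_zero_of_hausdorff_zero {X : Type*} [MetricSpace X] [MeasurableSpace X] [BorelSpace X] {n : ℕ} (hn : 0 < n)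
    {E : Set X} (hE : μH[(n : ℝ)] E = 0) : hContent n E = 0 := by
  set c : ℝ≥0∞ := unitBallVol n / 2 ^ n with hc
  have hcne : c ≠ ∞ := by
    refine (ENNReal.div_lt_top ?_ ?_).ne
    · exact (measure_ball_lt_top).ne
    · positivity
  refine le_antisymm ?_ zero_le
  have key : ∀ ε : ℝ≥0∞, 0 < ε → hContent n E ≤ ε := by
    intro ε hε
    set δ : ℝ≥0∞ := ε / (c + 1) with hδ
    have hδpos : 0 < δ := ENNReal.div_pos hε.ne' (by simp [hcne])
    rw [Measure.hausdorffMeasure_apply] at hE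
    have h1 : (⨅ (t : ℕ → Set X) (_ : E ⊆ ⋃ i, t i) (_ : ∀ i, EMetric.diam (t i) ≤ 1),
        ∑' i, ⨆ _ : (t i).Nonempty, EMetric.diam (t i) ^ (n : ℝ)) ≤ 0 := by
      calc _ ≤ _ := le_iSup₂ (f := fun (r : ℝ≥0∞) (_ : 0 < r) =>
              ⨅ (t : ℕ → Set X) (_ : E ⊆ ⋃ i, t i) (_ : ∀ i, EMetric.diam (t i) ≤ r),
                ∑' i, ⨆ _ : (t i).Nonempty, EMetric.diam (t i) ^ (n : ℝ)) 1 zero_lt_one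
        _ = 0 := hE
    have h2 := lt_of_le_of_lt h1 hδpos
    simp only [iInf_lt_iff] at h2
    obtain ⟨t, htcov, _, htsum⟩ := h2
    have hsum : (∑' i, EMetric.diam (t i) ^ n) ≤ δ := by
      refine le_trans (ENNReal.tsum_le_tsum fun i => ?_) htsum.le
      rcases (t i).eq_empty_or_nonempty with h | h
      · simp [h, zero_pow hn.ne', EMetric.diam, hn.ne']
      · rw [iSup_pos h, ENNReal.rpow_natCast]
    calc hContent n E ≤ c * ∑' i, EMetric.diam (t i) ^ n := iInf₂_le t htcov
      _ ≤ c * δ := by gcongr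
      _ ≤ (c + 1) * (ε / (c + 1)) := by gcongr; exact le_self_add
      _ ≤ ε := ENNReal.mul_div_le
  refine ENNReal.le_of_forall_pos_le_add fun ε hε _ => ?_
  simpa using key ε (by exact_mod_cast hε)

/-- Theorem, part (A): If `f : A → X` is Lipschitz on a set
`A ⊆ ℝ^{n+m}` of positive Lebesgue measure and the upper `n`-density
`Θ^{*n}(f,x)` is positive on a subset of `A` of positive Lebesgue measure,
then `ℋ^n(f(A)) > 0`. -/
theorem stmt0 {n m : ℕ} {X : Type*} [MetricSpace X] [MeasurableSpace X] [BorelSpace X]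
    (A : Set (EucSp (n + m))) (hA : MeasurableSet A) (hApos : 0 < volume A)
    (f : EucSp (n + m) → X) (hf : ∃ L : ℝ≥0, LipschitzOnWith L f A)
    (hdens : 0 < volume {x ∈ A | 0 < upperDensity n f A x}) :
    0 < μH[(n : ℝ)] (f '' A) := by
  rcases Nat.eq_zero_or_pos n with hn | hn
  · subst hn
    have hAne : A.Nonempty := nonempty_of_measure_ne_zero hApos.ne'
    have : (1 : ℝ≥0∞) ≤ μH[((0 : ℕ) : ℝ)] (f '' A) := by
      rw [Nat.cast_zero]
      exact Measure.one_le_hausdorffMeasure_zero_of_nonempty (hAne.image f)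
    exact lt_of_lt_of_le zero_lt_one this
  · by_contra h
    rw [not_lt, nonpos_iff_eq_zero] at h
    have key : ∀ x, upperDensity n f A x = 0 := by
      intro x
      have hfun : (fun r : ℝ => hContent n (f '' (Metric.ball x r ∩ A)) /
          (unitBallVol n * ENNReal.ofReal r ^ n)) = fun _ => (0 : ℝ≥0∞) := by
        funext r
        have hsub : μH[(n : ℝ)] (f '' (Metric.ball x r ∩ A)) = 0 :=
          le_antisymm (h ▸ measure_mono (image_mono (f := f) inter_subset_right)) zero_le
        rw [hContent_eq_zero_of_hausdorff_zero hn hsub, ENNReal.zero_div]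
      rw [upperDensity, hfun, limsup_const]
    have hempty : {x ∈ A | 0 < upperDensity n f A x} = ∅ := by
      ext x; simp [key]
    rw [hempty] at hdens
    simp at hdens

end
end

section
/- Let Q ⊂ ℝ^{n+m} be a cube, X a metric space, and f : Q → X a Lipschitz map. Then ℋ^{n,m}_∞(f,Q) ≤ (ω_n/2^n)(n+m)^{n/2} ∫_Q Θ_*^n(f,x) dx ≤ (ω_n/2^n)(n+m)^{n/2} ∫_Q Θ^{*n}(f,x) dx. -/
open MeasureTheory Metric Set Filter
open scoped ENNReal NNReal Topology

noncomputable section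

-- Section A : basic lemmas
section SectionA
variable {X : Type*} [PseudoEMetricSpace X] {n : ℕ}

lemma unitBallVol_pos (k : ℕ) : 0 < unitBallVol k :=
  measure_ball_pos volume 0 one_pos

lemma unitBallVol_lt_top (k : ℕ) : unitBallVol k < ∞ := measure_ball_lt_top

lemma hContent_mono {E F : Set X} (h : E ⊆ F) : hContent n E ≤ hContent n F :=
  le_iInf fun A => le_iInf fun hF => iInf_le_of_le A (iInf_le _ (h.trans hF))

lemma hContent_empty (hn : 0 < n) : hContent n (∅ : Set X) = 0 := by
  refine le_antisymm ?_ zero_le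
  refine iInf_le_of_le (fun _ => ∅) (iInf_le_of_le (empty_subset _) ?_)
  simp [EMetric.diam_empty, zero_pow hn.ne', tsum_zero, EMetric.diam, hn.ne']

lemma hContent_zero_eq_top (E : Set X) : hContent 0 E = ∞ := by
  rw [eq_top_iff]
  refine le_iInf fun A => le_iInf fun _ => ?_
  simp only [pow_zero]
  rw [ENNReal.tsum_const_eq_top_of_ne_zero one_ne_zero]
  rw [ENNReal.mul_top (by simp [ENNReal.div_eq_zero_iff, (unitBallVol_pos 0).ne'])]


end SectionA

-- Section B : cube geometry
section SectionB
variable {N : ℕ}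

lemma openCube_subset_closedCube {c : EucSp N} {d : ℝ} :
    openCube c d ⊆ closedCube c d := fun _ hx i => (hx i).le

lemma openCube_zero (hN : 0 < N) (c : EucSp N) : openCube c 0 = ∅ := by
  ext x
  simp only [openCube, mem_setOf_eq, mem_empty_iff_false, iff_false, not_forall, not_lt]
  exact ⟨⟨0, hN⟩, by simp⟩

lemma closedCube_subset_closedBall {c : EucSp N} {d : ℝ} (hd : 0 ≤ d) :
    closedCube c d ⊆ closedBall c (Real.sqrt N * d / 2) := by
  intro x hx
  rw [mem_closedBall, EuclideanSpace.dist_eq]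
  have h1 : ∑ i, dist (x i) (c i) ^ 2 ≤ (N : ℝ) * (d / 2) ^ 2 := by
    calc ∑ i, dist (x i) (c i) ^ 2 ≤ ∑ _i : Fin N, (d / 2) ^ 2 := by
          refine Finset.sum_le_sum fun i _ => ?_
          have h2 := hx i
          rw [Real.dist_eq]
          nlinarith [abs_nonneg (x i - c i)]
      _ = (N : ℝ) * (d / 2) ^ 2 := by simp [Finset.sum_const]
  calc Real.sqrt (∑ i, dist (x i) (c i) ^ 2) ≤ Real.sqrt ((N : ℝ) * (d / 2) ^ 2) :=
        Real.sqrt_le_sqrt h1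
    _ = Real.sqrt N * d / 2 := by
        rw [Real.sqrt_mul (by positivity), Real.sqrt_sq (by positivity)]; ring

lemma openCube_subset_ball (hN : 0 < N) {c : EucSp N} {d : ℝ} :
    openCube c d ⊆ ball c (Real.sqrt N * d / 2) := by
  intro x hx
  have hd : 0 < d := by
    have := hx ⟨0, hN⟩
    have := abs_nonneg (x ⟨0, hN⟩ - c ⟨0, hN⟩)
    linarith
  rw [mem_ball, EuclideanSpace.dist_eq]
  have h1 : ∑ i, dist (x i) (c i) ^ 2 < (N : ℝ) * (d / 2) ^ 2 := by
    have : ∑ i, dist (x i) (c i) ^ 2 < ∑ _i : Fin N, (d / 2) ^ 2 := by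
      refine Finset.sum_lt_sum_of_nonempty ⟨⟨0, hN⟩, Finset.mem_univ _⟩ fun i _ => ?_
      have h2 := hx i
      rw [Real.dist_eq]
      nlinarith [abs_nonneg (x i - c i)]
    calc ∑ i, dist (x i) (c i) ^ 2 < ∑ _i : Fin N, (d / 2) ^ 2 := this
      _ = (N : ℝ) * (d / 2) ^ 2 := by simp [Finset.sum_const]
  calc Real.sqrt (∑ i, dist (x i) (c i) ^ 2) < Real.sqrt ((N : ℝ) * (d / 2) ^ 2) := by
        exact Real.sqrt_lt_sqrt (Finset.sum_nonneg fun i _ => sq_nonneg _) h1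
    _ = Real.sqrt N * d / 2 := by
        rw [Real.sqrt_mul (by positivity), Real.sqrt_sq (by positivity)]; ring

lemma continuous_coord (i : Fin N) : Continuous fun x : EucSp N => x i :=
  (EuclideanSpace.proj (𝕜 := ℝ) i).continuous

lemma isClosed_closedCube {c : EucSp N} {d : ℝ} : IsClosed (closedCube c d) := by
  have : closedCube c d = ⋂ i, {x : EucSp N | |x i - c i| ≤ d / 2} := by
    ext x; simp [closedCube]
  rw [this]
  exact isClosed_iInter fun i =>
    isClosed_le (continuous_abs.comp ((continuous_coord i).sub continuous_const)) continuous_const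

lemma isOpen_openCube {c : EucSp N} {d : ℝ} : IsOpen (openCube c d) := by
  have : openCube c d = ⋂ i, {x : EucSp N | |x i - c i| < d / 2} := by
    ext x; simp [openCube]
  rw [this]
  exact isOpen_iInter_of_finite fun i =>
    isOpen_lt (continuous_abs.comp ((continuous_coord i).sub continuous_const)) continuous_const

lemma measurableSet_closedCube {c : EucSp N} {d : ℝ} : MeasurableSet (closedCube c d) :=
  isClosed_closedCube.measurableSet

lemma measurableSet_openCube {c : EucSp N} {d : ℝ} : MeasurableSet (openCube c d) :=
  isOpen_openCube.measurableSet

lemma volume_closedCube (c : EucSp N) (d : ℝ) :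
    volume (closedCube c d) = ENNReal.ofReal d ^ N := by
  have he : closedCube c d =
      (MeasurableEquiv.toLp 2 (Fin N → ℝ)).symm ⁻¹'
        (Set.pi univ fun i => Icc (c i - d / 2) (c i + d / 2)) := by
    ext x
    simp only [closedCube, mem_setOf_eq, mem_preimage, Set.mem_pi, mem_univ, true_implies,
      mem_Icc, MeasurableEquiv.toLp_symm_apply]
    exact forall_congr' fun i => abs_sub_le_iff.trans (by constructor <;> intro h <;>
      constructor <;> linarith [h.1, h.2])
  rw [he, (EuclideanSpace.volume_preserving_symm_measurableEquiv_toLp (Fin N)).measure_preimage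
    (MeasurableSet.univ_pi fun i => measurableSet_Icc).nullMeasurableSet]
  rw [volume_pi_pi]
  simp only [Real.volume_Icc]
  have : ∀ i : Fin N, c i + d / 2 - (c i - d / 2) = d := fun i => by ring
  simp only [this, Finset.prod_const, Finset.card_univ, Fintype.card_fin]

lemma volume_openCube (c : EucSp N) (d : ℝ) :
    volume (openCube c d) = ENNReal.ofReal d ^ N := by
  have he : openCube c d =
      (MeasurableEquiv.toLp 2 (Fin N → ℝ)).symm ⁻¹'
        (Set.pi univ fun i => Ioo (c i - d / 2) (c i + d / 2)) := by
    ext x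
    simp only [openCube, mem_setOf_eq, mem_preimage, Set.mem_pi, mem_univ, true_implies,
      mem_Ioo, MeasurableEquiv.toLp_symm_apply]
    exact forall_congr' fun i => abs_sub_lt_iff.trans (by constructor <;> intro h <;>
      constructor <;> linarith [h.1, h.2])
  rw [he, (EuclideanSpace.volume_preserving_symm_measurableEquiv_toLp (Fin N)).measure_preimage
    (MeasurableSet.univ_pi fun i => measurableSet_Ioo).nullMeasurableSet]
  rw [volume_pi_pi]
  simp only [Real.volume_Ioo]
  have : ∀ i : Fin N, c i + d / 2 - (c i - d / 2) = d := fun i => by ring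
  simp only [this, Finset.prod_const, Finset.card_univ, Fintype.card_fin]

lemma volume_closedCube_diff_openCube (c : EucSp N) (d : ℝ) :
    volume (closedCube c d \ openCube c d) = 0 := by
  rw [measure_diff openCube_subset_closedCube measurableSet_openCube.nullMeasurableSet
    (by rw [volume_openCube]; exact (ENNReal.pow_lt_top (n := N) ENNReal.ofReal_lt_top).ne),
    volume_closedCube, volume_openCube, tsub_self]

lemma mem_openCube_self {c : EucSp N} {d : ℝ} (hd : 0 < d) : c ∈ openCube c d :=
  fun i => by simp [hd, sub_self]

end SectionB

-- Section C : measurable minorant of the lower density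
section SectionC
variable {N : ℕ} {X : Type*} [PseudoEMetricSpace X]

/-- `ψ x r`. -/
def psiC (n : ℕ) (f : EucSp N → X) (Q : Set (EucSp N)) (x : EucSp N) (r : ℝ) : ℝ≥0∞ :=
  hContent n (f '' (Metric.ball x r ∩ Q))

lemma psiC_mono_ball {n : ℕ} {f : EucSp N → X} {Q : Set (EucSp N)} {x x' : EucSp N}
    {r r' : ℝ} (h : Metric.ball x r ⊆ Metric.ball x' r') :
    psiC n f Q x r ≤ psiC n f Q x' r' :=
  hContent_mono (image_mono (inter_subset_inter_left _ h))

lemma psiC_mono_radius {n : ℕ} {f : EucSp N → X} {Q : Set (EucSp N)} {x : EucSp N}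
    {r r' : ℝ} (h : r ≤ r') : psiC n f Q x r ≤ psiC n f Q x r' :=
  psiC_mono_ball (Metric.ball_subset_ball h)

/-- `Ψ q x = sup_{q' ∈ ℚ ∩ (0,q)} ψ x q'`. -/
def PsiC (n : ℕ) (f : EucSp N → X) (Q : Set (EucSp N)) (q : ℚ) (x : EucSp N) : ℝ≥0∞ :=
  ⨆ (q' : ℚ) (_ : 0 < q') (_ : q' < q), psiC n f Q x (q' : ℝ)

lemma PsiC_le_psiC {n : ℕ} {f : EucSp N → X} {Q : Set (EucSp N)} {q : ℚ} {x : EucSp N}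
    {r : ℝ} (h : (q : ℝ) ≤ r) : PsiC n f Q q x ≤ psiC n f Q x r := by
  refine iSup_le fun q' => iSup_le fun _ => iSup_le fun hq' => ?_
  exact psiC_mono_radius (by exact_mod_cast le_trans (le_of_lt (by exact_mod_cast hq')) h)

lemma psiC_le_PsiC {n : ℕ} {f : EucSp N → X} {Q : Set (EucSp N)} {q q' : ℚ} {x : EucSp N}
    (h0 : 0 < q') (h : q' < q) : psiC n f Q x (q' : ℝ) ≤ PsiC n f Q q x := by
  refine le_iSup_of_le q' ?_
  rw [iSup_pos h0, iSup_pos h]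

lemma lowerSemicontinuous_PsiC (n : ℕ) (f : EucSp N → X) (Q : Set (EucSp N)) (q : ℚ) :
    LowerSemicontinuous (PsiC n f Q q) := by
  intro x c hc
  rw [PsiC] at hc
  simp only [lt_iSup_iff] at hc
  obtain ⟨q', hq'0, hq'q, hq'⟩ := hc
  set δ : ℚ := (q - q') / 2 with hδ
  have hδ0 : 0 < δ := by rw [hδ]; linarith
  have hmem : Metric.ball x (δ : ℝ) ∈ 𝓝 x := Metric.ball_mem_nhds x (by exact_mod_cast hδ0)
  filter_upwards [hmem] with x' hx'
  have hsub : Metric.ball x (q' : ℝ) ⊆ Metric.ball x' ((q' + δ : ℚ) : ℝ) := by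
    intro y hy
    rw [Metric.mem_ball] at hy ⊢
    have h1 : dist y x' ≤ dist y x + dist x x' := dist_triangle _ _ _
    have h2 : dist x x' < (δ : ℝ) := by rw [dist_comm]; exact hx'
    push_cast
    linarith
  calc c < psiC n f Q x (q' : ℝ) := hq'
    _ ≤ psiC n f Q x' ((q' + δ : ℚ) : ℝ) := psiC_mono_ball hsub
    _ ≤ PsiC n f Q q x' := psiC_le_PsiC (by linarith) (by rw [hδ]; linarith)

/-- The measurable minorant `g̃` of the lower density. -/
def gTil (n : ℕ) (f : EucSp N → X) (Q : Set (EucSp N)) (x : EucSp N) : ℝ≥0∞ :=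
  ⨆ k : ℕ, ⨅ (q : ℚ) (_ : 0 < q) (_ : (q : ℝ) < 1 / (k + 1)),
    PsiC n f Q q x / (unitBallVol n * ENNReal.ofReal (q : ℝ) ^ n)

lemma measurable_gTil (n : ℕ) (f : EucSp N → X) (Q : Set (EucSp N)) :
    Measurable (gTil n f Q) := by
  refine Measurable.iSup fun k => ?_
  refine Measurable.iInf fun q => ?_
  refine Measurable.iInf fun _ => ?_
  refine Measurable.iInf fun _ => ?_
  exact ((lowerSemicontinuous_PsiC n f Q q).measurable).div measurable_const

lemma denom_ne_zero {n : ℕ} {r : ℝ} (hr : 0 < r) :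
    unitBallVol n * ENNReal.ofReal r ^ n ≠ 0 := by
  exact mul_ne_zero (unitBallVol_pos n).ne' (pow_ne_zero n (by simp [hr, ENNReal.ofReal_pos]))

lemma denom_ne_top {n : ℕ} {r : ℝ} : unitBallVol n * ENNReal.ofReal r ^ n ≠ ∞ :=
  ENNReal.mul_ne_top (unitBallVol_lt_top n).ne (ENNReal.pow_ne_top ENNReal.ofReal_ne_top)

/-- key approximation: sup over rationals below `r` of `ofReal q ^ n`. -/
lemma iSup_ofReal_rat_pow {r : ℝ} (hr : 0 < r) (hn : 0 < n) :
    (⨆ (q : ℚ) (_ : 0 < q) (_ : (q : ℝ) < r), ENNReal.ofReal (q : ℝ) ^ n)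
      = ENNReal.ofReal r ^ n := by
  apply le_antisymm
  · refine iSup_le fun q => iSup_le fun hq0 => iSup_le fun hqr => ?_
    exact pow_le_pow_left' (ENNReal.ofReal_le_ofReal hqr.le) n
  · refine le_of_forall_lt fun a ha => ?_
    rw [← ENNReal.ofReal_pow hr.le] at ha
    have hafin : a < ∞ := ha.trans_le le_top
    set s : ℝ := max 0 a.toReal with hs
    have hsr : s < r ^ n := by
      rcases le_or_gt a 0 with h | h
      · have : a = 0 := le_antisymm h zero_le
        simp [hs, this]; positivity
      · have := (ENNReal.lt_ofReal_iff_toReal_lt hafin.ne).1 ha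
        simp only [hs, max_lt_iff]
        exact ⟨by positivity, this⟩
    set t : ℝ := s ^ ((n : ℝ)⁻¹) with ht
    have hs0 : 0 ≤ s := le_max_left _ _
    have htr : t < r := by
      have h1 : t < (r ^ n) ^ ((n : ℝ)⁻¹) := by
        exact Real.rpow_lt_rpow hs0 hsr (inv_pos.2 (by exact_mod_cast hn))
      have h2 : ((r : ℝ) ^ n) ^ ((n : ℝ)⁻¹) = r := by
        rw [← Real.rpow_natCast r n, ← Real.rpow_mul hr.le]
        rw [mul_inv_cancel₀ (by exact_mod_cast hn.ne')]
        exact Real.rpow_one r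
      rwa [h2] at h1
    have ht0 : 0 ≤ t := Real.rpow_nonneg hs0 _
    obtain ⟨q, hq1, hq2⟩ := exists_rat_btwn htr
    have hq0 : 0 < q := by exact_mod_cast ht0.trans_lt hq1
    refine lt_of_lt_of_le ?_ (le_iSup_of_le q (by rw [iSup_pos hq0, iSup_pos (by exact_mod_cast hq2)]))
    have htn : t ^ n = s := by
      rw [ht, ← Real.rpow_natCast (s ^ ((n:ℝ)⁻¹)) n, ← Real.rpow_mul hs0]
      rw [inv_mul_cancel₀ (by exact_mod_cast hn.ne')]
      exact Real.rpow_one s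
    have hstep : s < (q : ℝ) ^ n := by
      calc s = t ^ n := htn.symm
        _ < (q : ℝ) ^ n := by
          exact pow_lt_pow_left₀ hq1 ht0 hn.ne'
    calc a ≤ ENNReal.ofReal s := by
          rcases le_or_gt a 0 with h | h
          · exact le_trans h zero_le
          · rw [hs]
            refine le_trans (le_of_eq (ENNReal.ofReal_toReal hafin.ne).symm) ?_
            exact ENNReal.ofReal_le_ofReal (le_max_right _ _)
      _ < ENNReal.ofReal ((q : ℝ) ^ n) := by
          rw [ENNReal.ofReal_lt_ofReal_iff (by positivity)]; exact hstep
      _ = ENNReal.ofReal (q : ℝ) ^ n := by rw [ENNReal.ofReal_pow (by exact_mod_cast hq0.le)]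

/-- `g̃ ≤` the lower density. -/
lemma gTil_le_lowerDensity {n : ℕ} (hn : 0 < n) (f : EucSp N → X) (Q : Set (EucSp N))
    (x : EucSp N) : gTil n f Q x ≤ lowerDensity n f Q x := by
  rw [lowerDensity, (nhdsGT_basis (0:ℝ)).liminf_eq_iSup_iInf]
  refine iSup_le fun k => ?_
  have hk : (0:ℝ) < 1 / (k + 1) := by positivity
  refine le_trans ?_ (le_iSup_of_le (1 / (k + 1 : ℝ)) (le_iSup_of_le hk le_rfl))
  refine le_iInf₂ fun r hr => ?_
  obtain ⟨hr0, hrk⟩ := hr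
  -- goal : Inf_k ≤ psi x r / (ω r^n)
  rcases eq_top_or_lt_top (psiC n f Q x r) with htop | hfin
  · -- numerator infinite
    rw [psiC] at htop
    rw [htop, ENNReal.top_div_of_ne_top denom_ne_top]
    exact le_top
  rw [ENNReal.le_div_iff_mul_le (Or.inl (denom_ne_zero hr0)) (Or.inl denom_ne_top)]
  calc (⨅ (q : ℚ) (_ : 0 < q) (_ : (q : ℝ) < 1 / (k + 1)),
        PsiC n f Q q x / (unitBallVol n * ENNReal.ofReal (q : ℝ) ^ n))
          * (unitBallVol n * ENNReal.ofReal r ^ n)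
      = ⨆ (q : ℚ) (_ : 0 < q) (_ : (q : ℝ) < r),
          (⨅ (q : ℚ) (_ : 0 < q) (_ : (q : ℝ) < 1 / (k + 1)),
            PsiC n f Q q x / (unitBallVol n * ENNReal.ofReal (q : ℝ) ^ n))
            * (unitBallVol n * ENNReal.ofReal (q : ℝ) ^ n) := by
        rw [← iSup_ofReal_rat_pow hr0 hn]
        simp only [ENNReal.mul_iSup]
    _ ≤ psiC n f Q x r := by
        refine iSup_le fun q => iSup_le fun hq0 => iSup_le fun hqr => ?_
        have hq0' : (0:ℝ) < (q:ℝ) := by exact_mod_cast hq0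
        have hI : (⨅ (q : ℚ) (_ : 0 < q) (_ : (q : ℝ) < 1 / (k + 1)),
            PsiC n f Q q x / (unitBallVol n * ENNReal.ofReal (q : ℝ) ^ n))
              ≤ psiC n f Q x r / (unitBallVol n * ENNReal.ofReal (q : ℝ) ^ n) := by
          refine le_trans (iInf_le_of_le q (by
            rw [iInf_pos hq0, iInf_pos (hqr.trans hrk)])) ?_
          exact ENNReal.div_le_div_right (PsiC_le_psiC hqr.le) _
        rwa [ENNReal.le_div_iff_mul_le (Or.inl (denom_ne_zero hq0')) (Or.inl denom_ne_top)] at hI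

end SectionC

-- Section C2 : admissibility
section SectionC2
variable {N : ℕ} {X : Type*} [PseudoEMetricSpace X]

lemma ratio_lemma {n : ℕ} (hn : 0 < n) {A : ℝ≥0∞} (hA : A ≠ ∞) {γ : ℝ} (hγ : 0 < γ)
    {q : ℚ} (hq : 0 < q) :
    ∃ q' : ℚ, 0 < q' ∧ q' < q ∧
      A * ENNReal.ofReal (q : ℝ) ^ n ≤ (A + ENNReal.ofReal γ) * ENNReal.ofReal (q' : ℝ) ^ n := by
  set a : ℝ := A.toReal with ha'
  have ha : A = ENNReal.ofReal a := (ENNReal.ofReal_toReal hA).symm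
  have ha0 : 0 ≤ a := ENNReal.toReal_nonneg
  have hq0 : (0:ℝ) < (q:ℝ) := by exact_mod_cast hq
  rcases eq_or_lt_of_le ha0 with ha' | hapos
  · -- A = 0
    refine ⟨q / 2, by positivity, by linarith, ?_⟩
    have : A = 0 := by rw [ha, ← ha', ENNReal.ofReal_zero]
    rw [this, zero_mul]
    exact zero_le
  · set ρ : ℝ := (a / (a + γ)) ^ ((n : ℝ)⁻¹) with hρ
    have hfrac0 : 0 < a / (a + γ) := by positivity
    have hfrac1 : a / (a + γ) < 1 := by
      rw [div_lt_one (by positivity)]; linarith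
    have hρ0 : 0 < ρ := Real.rpow_pos_of_pos hfrac0 _
    have hρ1 : ρ < 1 := by
      calc ρ < 1 ^ ((n:ℝ)⁻¹) := Real.rpow_lt_rpow hfrac0.le hfrac1 (inv_pos.2 (by exact_mod_cast hn))
        _ = 1 := Real.one_rpow _
    obtain ⟨q', hq'1, hq'2⟩ := exists_rat_btwn (show ρ * (q:ℝ) < (q:ℝ) by nlinarith)
    have hq'0 : (0:ℝ) < (q':ℝ) := lt_trans (by positivity) hq'1
    refine ⟨q', by exact_mod_cast hq'0, by exact_mod_cast hq'2, ?_⟩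
    have hρn : ρ ^ n = a / (a + γ) := by
      rw [hρ, ← Real.rpow_natCast ((a / (a+γ)) ^ ((n:ℝ)⁻¹)) n, ← Real.rpow_mul hfrac0.le,
        inv_mul_cancel₀ (by exact_mod_cast hn.ne'), Real.rpow_one]
    have hkey : a * (q:ℝ) ^ n ≤ (a + γ) * (q':ℝ) ^ n := by
      have h1 : (ρ * q) ^ n ≤ (q' : ℝ) ^ n := pow_le_pow_left₀ (by positivity) hq'1.le n
      have h2 : (ρ * q) ^ n = (a / (a + γ)) * (q:ℝ) ^ n := by
        rw [mul_pow, hρn]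
      have h3 : a / (a + γ) * (q:ℝ) ^ n ≤ (q':ℝ) ^ n := h2 ▸ h1
      calc a * (q:ℝ) ^ n = (a + γ) * (a / (a + γ) * (q:ℝ) ^ n) := by
            field_simp
          _ ≤ (a + γ) * (q':ℝ) ^ n := by
            exact mul_le_mul_of_nonneg_left h3 (by positivity)
    calc A * ENNReal.ofReal (q : ℝ) ^ n
        = ENNReal.ofReal (a * (q:ℝ) ^ n) := by
          rw [ENNReal.ofReal_mul ha0, ENNReal.ofReal_pow hq0.le, ← ha]
      _ ≤ ENNReal.ofReal ((a + γ) * (q':ℝ) ^ n) := ENNReal.ofReal_le_ofReal hkey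
      _ = (A + ENNReal.ofReal γ) * ENNReal.ofReal (q' : ℝ) ^ n := by
          rw [ENNReal.ofReal_mul (by positivity), ENNReal.ofReal_pow hq'0.le,
            ENNReal.ofReal_add ha0 hγ.le, ← ha]

lemma gTil_admissible {n : ℕ} (hn : 0 < n) (f : EucSp N → X) (Q : Set (EucSp N))
    (x : EucSp N) {ρ : ℝ} (hρ : 0 < ρ) {δ' : ℝ} (hδ' : 0 < δ') :
    ∃ q : ℚ, 0 < (q : ℝ) ∧ (q : ℝ) < ρ ∧
      psiC n f Q x (q : ℝ) ≤ (gTil n f Q x + ENNReal.ofReal δ') *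
        (unitBallVol n * ENNReal.ofReal (q : ℝ) ^ n) := by
  rcases eq_top_or_lt_top (gTil n f Q x) with htop | hfin
  · obtain ⟨q, hq1, hq2⟩ := exists_rat_btwn hρ
    have hq0 : (0:ℝ) < (q:ℝ) := hq1
    refine ⟨q, hq0, hq2, ?_⟩
    rw [htop, top_add, ENNReal.top_mul (denom_ne_zero hq0)]
    exact le_top
  · set c : ℝ≥0∞ := ENNReal.ofReal (δ' / 2) with hc
    have hc0 : c ≠ 0 := by rw [hc]; simp [ENNReal.ofReal_pos]; linarith
    obtain ⟨k, hk⟩ := exists_nat_one_div_lt hρ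
    have hIle : (⨅ (q : ℚ) (_ : 0 < q) (_ : (q : ℝ) < 1 / (k + 1)),
        PsiC n f Q q x / (unitBallVol n * ENNReal.ofReal (q : ℝ) ^ n)) < gTil n f Q x + c := by
      refine lt_of_le_of_lt (le_iSup_of_le k le_rfl : _ ≤ gTil n f Q x) ?_
      exact ENNReal.lt_add_right hfin.ne hc0
    simp only [iInf_lt_iff] at hIle
    obtain ⟨q, hq0, hqk, hq⟩ := hIle
    have hq0' : (0:ℝ) < (q:ℝ) := by exact_mod_cast hq0
    have hPsi : PsiC n f Q q x < (gTil n f Q x + c) * (unitBallVol n * ENNReal.ofReal (q:ℝ) ^ n) := by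
      rwa [ENNReal.div_lt_iff (Or.inl (denom_ne_zero hq0')) (Or.inl denom_ne_top)] at hq
    have hA : gTil n f Q x + c ≠ ∞ := by
      rw [hc]; exact ENNReal.add_ne_top.2 ⟨hfin.ne, ENNReal.ofReal_ne_top⟩
    obtain ⟨q', hq'0, hq'q, hq'⟩ := ratio_lemma hn (A := gTil n f Q x + c) hA (half_pos hδ') hq0
    have hq'0' : (0:ℝ) < (q':ℝ) := by exact_mod_cast hq'0
    have hq'ρ : (q':ℝ) < ρ := by
      have h1 : (q':ℝ) < (q:ℝ) := by exact_mod_cast hq'q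
      linarith [lt_trans (lt_of_lt_of_le h1 hqk.le) hk]
    refine ⟨q', hq'0', hq'ρ, ?_⟩
    have hcc : c + c = ENNReal.ofReal δ' := by
      rw [hc, ← ENNReal.ofReal_add (by linarith) (by linarith)]
      norm_num
    calc psiC n f Q x (q':ℝ) ≤ PsiC n f Q q x := psiC_le_PsiC hq'0 hq'q
      _ ≤ (gTil n f Q x + c) * (unitBallVol n * ENNReal.ofReal (q:ℝ) ^ n) := hPsi.le
      _ = (gTil n f Q x + c) * ENNReal.ofReal (q:ℝ) ^ n * unitBallVol n := by ring
      _ ≤ (gTil n f Q x + c + c) * ENNReal.ofReal (q':ℝ) ^ n * unitBallVol n := by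
          exact mul_le_mul_left hq' _
      _ = (gTil n f Q x + ENNReal.ofReal δ') * (unitBallVol n * ENNReal.ofReal (q':ℝ) ^ n) := by
          rw [add_assoc, hcc]; ring

end SectionC2

-- Section D1 : auxiliary lemmas for the covering argument
section SectionD1

lemma const_id {n m : ℕ} {d : ℝ} (hd : 0 ≤ d) :
    unitBallVol n * ENNReal.ofReal (Real.sqrt ((n + m : ℕ) : ℝ) * d / 2) ^ n * ENNReal.ofReal d ^ m
      = unitBallVol n / 2 ^ n * ((n + m : ℕ) : ℝ≥0∞) ^ ((n : ℝ) / 2)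
          * ENNReal.ofReal d ^ (n + m) := by
  have hcast : ((n + m : ℕ) : ℝ) = (n:ℝ) + m := by push_cast; ring
  rw [hcast]
  have hsq : (0:ℝ) ≤ Real.sqrt ((n:ℝ) + m) := Real.sqrt_nonneg _
  have h1 : ENNReal.ofReal (Real.sqrt ((n:ℝ) + m) * d / 2)
      = ENNReal.ofReal (Real.sqrt ((n:ℝ) + m)) * ENNReal.ofReal d / 2 := by
    rw [ENNReal.ofReal_div_of_pos two_pos, ENNReal.ofReal_mul hsq]
    norm_num
  have h2 : ENNReal.ofReal (Real.sqrt ((n:ℝ) + m)) ^ n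
      = ((n + m : ℕ) : ℝ≥0∞) ^ ((n : ℝ) / 2) := by
    have hnm : (0:ℝ) ≤ (n:ℝ) + m := by positivity
    rw [← ENNReal.ofReal_pow hsq]
    have h3 : Real.sqrt ((n:ℝ) + m) ^ n = ((n:ℝ) + m) ^ ((n : ℝ) / 2) := by
      rw [Real.sqrt_eq_rpow, ← Real.rpow_natCast (((n:ℝ) + m) ^ ((1:ℝ)/2)) n,
        ← Real.rpow_mul hnm]
      congr 1; ring
    rw [h3, ← ENNReal.ofReal_rpow_of_nonneg hnm (by positivity)]
    congr 1
    rw [← ENNReal.ofReal_natCast (n + m)]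
    congr 1; push_cast; ring
  rw [h1]
  simp only [div_eq_mul_inv, mul_pow, ← ENNReal.inv_pow, h2, pow_add]
  ring

lemma inv_one_sub_le {η : ℝ≥0∞} (hη : η ≤ 1/2) : (1 - η)⁻¹ ≤ 1 + 2*η := by
  have hηfin : η ≠ ∞ := ne_top_of_le_ne_top (by simp) hη
  lift η to ℝ≥0 using hηfin
  have hc : (η:ℝ) ≤ 1/2 := by
    have := ENNReal.toReal_mono (by simp : (1/2:ℝ≥0∞) ≠ ⊤) hη
    simpa using this
  have hη2 : (η:ℝ≥0) ≤ 1/2 := by exact_mod_cast hc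
  have hle1 : (η:ℝ≥0) ≤ 1 := hη2.trans (by norm_num)
  have hlt1 : (η:ℝ≥0) < 1 := lt_of_le_of_lt hη2 (by exact_mod_cast (by norm_num : (1/2:ℝ) < 1))
  rw [← ENNReal.coe_one, ← ENNReal.coe_sub, ← ENNReal.coe_inv, ← ENNReal.coe_ofNat,
    ← ENNReal.coe_mul, ← ENNReal.coe_add, ENNReal.coe_le_coe]
  · rw [← NNReal.coe_le_coe]
    push_cast [NNReal.coe_sub hle1]
    have h0 : (0:ℝ) < 1 - (η:ℝ) := by linarith
    rw [← one_div, div_le_iff₀ h0]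
    nlinarith [(η:ℝ≥0).coe_nonneg]
  · simp [tsub_eq_zero_iff_le, not_le.2 hlt1]

lemma cube_density_of_ball {N : ℕ} {A : Set (EucSp N)} (hA : MeasurableSet A)
    (x : EucSp N) {d : ℝ} (hd : 0 ≤ d) {η : ℝ≥0∞}
    (hball : volume (closedBall x (Real.sqrt N * d / 2) \ A) ≤ η * ENNReal.ofReal d ^ N) :
    (1 - η) * ENNReal.ofReal d ^ N ≤ volume (closedCube x d ∩ A) := by
  have h1 : volume (closedCube x d)
      ≤ volume (closedCube x d ∩ A) + volume (closedCube x d \ A) :=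
    measure_le_inter_add_diff _ _ _
  have h2 : volume (closedCube x d \ A) ≤ η * ENNReal.ofReal d ^ N :=
    le_trans (measure_mono (diff_subset_diff_left (closedCube_subset_closedBall hd))) hball
  rw [volume_closedCube] at h1
  have h3 : ENNReal.ofReal d ^ N - η * ENNReal.ofReal d ^ N ≤ volume (closedCube x d ∩ A) := by
    rw [tsub_le_iff_right]
    exact h1.trans (add_le_add_right h2 _)
  refine le_trans (le_of_eq ?_) h3
  rw [ENNReal.sub_mul (fun _ _ => ENNReal.pow_ne_top ENNReal.ofReal_ne_top), one_mul]

end SectionD1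

-- Section D2 : the core covering estimate
section SectionD2
variable {n m : ℕ} {X : Type*} [MetricSpace X]

lemma core_estimate (hn : 0 < n) (a : EucSp (n + m)) {D : ℝ} (hD : 0 < D)
    (f : EucSp (n + m) → X) {δ : ℝ} (hδ : 0 < δ) {η : ℝ≥0∞} (hη0 : 0 < η) (hη1 : η < 1)
    (hI : ∫⁻ x in closedCube a D, gTil n f (closedCube a D) x ≠ ∞) :
    hnmContent n m f (closedCube a D) ≤
      unitBallVol n / 2 ^ n * ((n + m : ℕ) : ℝ≥0∞) ^ ((n : ℝ) / 2) *
        ((1 - η)⁻¹ * (∫⁻ x in closedCube a D, gTil n f (closedCube a D) x)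
          + ENNReal.ofReal (3 * δ) * volume (closedCube a D)) := by
  classical
  set Q : Set (EucSp (n+m)) := closedCube a D with hQdef
  set g : EucSp (n+m) → ℝ≥0∞ := gTil n f Q with hgdef
  set C : ℝ≥0∞ := unitBallVol n / 2 ^ n * ((n + m : ℕ) : ℝ≥0∞) ^ ((n : ℝ) / 2) with hCdef
  set s : Set (EucSp (n+m)) := openCube a D with hsdef
  have hNpos : 0 < n + m := lt_of_lt_of_le hn (Nat.le_add_right n m)
  have hsQ : s ⊆ Q := openCube_subset_closedCube
  have hgm : Measurable g := measurable_gTil n f Q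
  set lev : EucSp (n+m) → ℕ := fun y => ⌊(g y).toReal / δ⌋₊ with hlev
  set A : ℕ → Set (EucSp (n+m)) := fun k =>
    (s ∩ {y | ENNReal.ofReal (k * δ) ≤ g y}) ∩ {y | g y < ENNReal.ofReal ((k + 1) * δ)} with hA
  have hAmeas : ∀ k, MeasurableSet (A k) := fun k =>
    (measurableSet_openCube.inter (measurableSet_le measurable_const hgm)).inter
      (measurableSet_lt hgm measurable_const)
  have hAg : ∀ k, ∀ y ∈ A k, ENNReal.ofReal (k * δ) ≤ g y := fun k y hy => hy.1.2
  have hmemA : ∀ x ∈ s, g x ≠ ∞ → x ∈ A (lev x) := by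
    intro x hx hfin
    have hT0 : 0 ≤ (g x).toReal := ENNReal.toReal_nonneg
    refine ⟨⟨hx, ?_⟩, ?_⟩
    · show ENNReal.ofReal ((lev x : ℝ) * δ) ≤ g x
      have h1 : ((⌊(g x).toReal / δ⌋₊ : ℝ)) * δ ≤ (g x).toReal := by
        have h2 := Nat.floor_le (by positivity : (0:ℝ) ≤ (g x).toReal / δ)
        calc ((⌊(g x).toReal / δ⌋₊ : ℝ)) * δ ≤ ((g x).toReal / δ) * δ := by nlinarith
          _ = (g x).toReal := by field_simp
      calc ENNReal.ofReal ((lev x : ℝ) * δ) ≤ ENNReal.ofReal (g x).toReal :=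
            ENNReal.ofReal_le_ofReal h1
        _ = g x := ENNReal.ofReal_toReal hfin
    · show g x < ENNReal.ofReal (((lev x : ℝ) + 1) * δ)
      have h2 : (g x).toReal < ((⌊(g x).toReal / δ⌋₊ : ℝ) + 1) * δ := by
        have h3 := Nat.lt_floor_add_one ((g x).toReal / δ)
        calc (g x).toReal = ((g x).toReal / δ) * δ := by field_simp
          _ < ((⌊(g x).toReal / δ⌋₊ : ℝ) + 1) * δ := by nlinarith
      calc g x = ENNReal.ofReal (g x).toReal := (ENNReal.ofReal_toReal hfin).symm
        _ < ENNReal.ofReal (((lev x : ℝ) + 1) * δ) := by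
            rw [ENNReal.ofReal_lt_ofReal_iff (by positivity)]
            exact h2
  have hae : ∀ᵐ x ∂(volume : Measure (EucSp (n+m))),
      (∀ k, x ∈ A k → Tendsto (fun r => volume (A k ∩ closedBall x r) / volume (closedBall x r))
        (𝓝[>] (0:ℝ)) (𝓝 1)) ∧ (x ∈ Q → g x < ∞) := by
    refine Filter.Eventually.and (ae_all_iff.2 fun k => ?_) (ae_imp_of_ae_restrict (ae_lt_top hgm hI))
    exact (ae_imp_of_ae_restrict (Besicovitch.ae_tendsto_measure_inter_div volume (A k))).mono
      (fun x hx hxk => hx hxk)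
  set E0 : Set (EucSp (n+m)) := {x | ¬ ((∀ k, x ∈ A k →
      Tendsto (fun r => volume (A k ∩ closedBall x r) / volume (closedBall x r))
        (𝓝[>] (0:ℝ)) (𝓝 1)) ∧ (x ∈ Q → g x < ∞))} with hE0
  have hE0null : volume E0 = 0 := ae_iff.1 hae
  set κ : ℝ≥0∞ := unitBallVol (n+m) with hκ
  set β : ℝ≥0∞ := ENNReal.ofReal ((Real.sqrt ((n+m : ℕ) : ℝ) / 2) ^ (n+m)) * κ with hβ
  have hNcast : (0:ℝ) < ((n+m : ℕ) : ℝ) := by exact_mod_cast hNpos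
  have hsqpos : (0:ℝ) < Real.sqrt ((n+m : ℕ) : ℝ) := Real.sqrt_pos.2 (by push_cast at hNcast ⊢; linarith)
  have hβ0 : β ≠ 0 := by
    refine mul_ne_zero ?_ (unitBallVol_pos _).ne'
    simp only [ne_eq, ENNReal.ofReal_eq_zero, not_le]
    positivity
  have hβtop : β ≠ ∞ := ENNReal.mul_ne_top ENNReal.ofReal_ne_top (unitBallVol_lt_top _).ne
  set η₀ : ℝ≥0∞ := min (η / β) 1 with hη₀
  have hη₀0 : η₀ ≠ 0 :=
    (lt_min (ENNReal.div_pos hη0.ne' hβtop) one_pos).ne'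
  set t : Set (EucSp (n+m) × ℝ) := {p | 0 < p.2 ∧ closedCube p.1 p.2 ⊆ s ∧ p.1 ∈ A (lev p.1) ∧
    psiC n f Q p.1 (Real.sqrt ((n+m : ℕ) : ℝ) * p.2 / 2) ≤
      (g p.1 + ENNReal.ofReal (2 * δ)) *
        (unitBallVol n * ENNReal.ofReal (Real.sqrt ((n+m : ℕ) : ℝ) * p.2 / 2) ^ n) ∧
    (1 - η) * ENNReal.ofReal p.2 ^ (n+m) ≤ volume (closedCube p.1 p.2 ∩ A (lev p.1))} with ht
  set Cv : ℝ≥0 := ((3 * Real.sqrt ((n+m : ℕ) : ℝ) / 2) ^ (n+m) * κ.toReal).toNNReal with hCv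
  have hvol_cB : ∀ (x : EucSp (n+m)) {r : ℝ}, 0 ≤ r →
      volume (closedBall x r) = ENNReal.ofReal (r ^ (n+m)) * κ := by
    intro x r hr
    rw [Measure.addHaar_closedBall volume x hr, finrank_euclideanSpace_fin]
    rfl
  obtain ⟨u, hut, hucount, hudisj, hucov⟩ :=
    Vitali.exists_disjoint_covering_ae (volume : Measure (EucSp (n+m))) (s \ E0) t Cv
      (fun p => Real.sqrt ((n+m : ℕ) : ℝ) * p.2 / 2) Prod.fst (fun p => closedCube p.1 p.2)
      (fun p hp => closedCube_subset_closedBall (le_of_lt hp.1))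
      (by
        intro p hp
        have hd0 : 0 < p.2 := hp.1
        have h3r : (0:ℝ) ≤ 3 * (Real.sqrt ((n+m : ℕ) : ℝ) * p.2 / 2) := by positivity
        rw [hvol_cB p.1 h3r, volume_closedCube]
        have hrr : (3 * (Real.sqrt ((n+m : ℕ) : ℝ) * p.2 / 2)) ^ (n+m)
            = (3 * Real.sqrt ((n+m : ℕ) : ℝ) / 2) ^ (n+m) * p.2 ^ (n+m) := by
          rw [← mul_pow]; congr 1; ring
        have hκtop : κ ≠ ⊤ := (unitBallVol_lt_top _).ne
        have hcoe : (Cv : ℝ≥0∞)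
            = ENNReal.ofReal ((3 * Real.sqrt ((n+m : ℕ) : ℝ) / 2) ^ (n+m) * κ.toReal) := rfl
        rw [hrr, ENNReal.ofReal_mul (by positivity), hcoe,
          ENNReal.ofReal_mul (by positivity), ENNReal.ofReal_toReal hκtop,
          ENNReal.ofReal_pow hd0.le]
        exact le_of_eq (by ring))
      (fun p hp => ⟨p.1, interior_maximal openCube_subset_closedCube isOpen_openCube
        (mem_openCube_self hp.1)⟩)
      (fun p _ => isClosed_closedCube)
      (by
        rintro x ⟨hxs, hxE⟩ ε hε
        have hPx := not_not.1 hxE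
        have hgfin : g x ≠ ⊤ := (hPx.2 (hsQ hxs)).ne
        have hxA := hmemA x hxs hgfin
        have htend := hPx.1 (lev x) hxA
        have h1lt : (1:ℝ≥0∞) - η₀ < 1 := ENNReal.sub_lt_self ENNReal.one_ne_top one_ne_zero hη₀0
        have hev := htend.eventually (lt_mem_nhds h1lt)
        rw [(nhdsGT_basis (0:ℝ)).eventually_iff] at hev
        obtain ⟨ρ₂, hρ₂pos, hρ₂⟩ := hev
        obtain ⟨ρ₁, hρ₁pos, hρ₁⟩ := Metric.isOpen_iff.1 isOpen_openCube x hxs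
        have hρpos : (0:ℝ) < min ε (min ρ₁ ρ₂) := lt_min hε (lt_min hρ₁pos hρ₂pos)
        obtain ⟨q, hq0, hqρ, hq⟩ := gTil_admissible hn f Q x hρpos
          (show (0:ℝ) < 2*δ by linarith)
        have hsqN : (0:ℝ) < Real.sqrt ((n+m : ℕ) : ℝ) := hsqpos
        set d : ℝ := 2*(q:ℝ)/Real.sqrt ((n+m : ℕ) : ℝ) with hddef
        have hd0 : 0 < d := by rw [hddef]; positivity
        have hqd : Real.sqrt ((n+m : ℕ) : ℝ) * d / 2 = (q:ℝ) := by
          rw [hddef]; field_simp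
        have hqε : (q:ℝ) ≤ ε := le_of_lt (lt_of_lt_of_le hqρ (min_le_left _ _))
        have hqρ₁ : (q:ℝ) < ρ₁ :=
          lt_of_lt_of_le hqρ ((min_le_right _ _).trans (min_le_left _ _))
        have hqρ₂ : (q:ℝ) < ρ₂ :=
          lt_of_lt_of_le hqρ ((min_le_right _ _).trans (min_le_right _ _))
        refine ⟨(x, d), ⟨hd0, ?_, hxA, ?_, ?_⟩, ?_, rfl⟩
        · -- closedCube x d ⊆ s
          refine (closedCube_subset_closedBall hd0.le).trans ?_
          rw [hqd]
          exact (closedBall_subset_ball hqρ₁).trans hρ₁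
        · -- content condition
          show psiC n f Q x (Real.sqrt ((n+m : ℕ) : ℝ) * d / 2) ≤ _
          rw [hqd]
          exact hq
        · -- density condition
          refine cube_density_of_ball (hAmeas (lev x)) x hd0.le ?_
          rw [hqd]
          have hcb := hρ₂ ⟨hq0, hqρ₂⟩
          have hcB0 : volume (closedBall x (q:ℝ)) ≠ 0 :=
            (measure_closedBall_pos volume x hq0).ne'
          have hcBtop : volume (closedBall x (q:ℝ)) ≠ ⊤ := measure_closedBall_lt_top.ne
          have h1 : (1 - η₀) * volume (closedBall x (q:ℝ))
              ≤ volume (closedBall x (q:ℝ) ∩ A (lev x)) := by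
            rw [inter_comm]
            exact ((ENNReal.lt_div_iff_mul_lt (Or.inl hcB0) (Or.inl hcBtop)).1 hcb).le
          have h2 : volume (closedBall x (q:ℝ) \ A (lev x))
              ≤ η₀ * volume (closedBall x (q:ℝ)) := by
            have hsum := measure_inter_add_diff (μ := (volume : Measure (EucSp (n+m)))) (closedBall x (q:ℝ)) (hAmeas (lev x))
            rw [add_comm] at hsum
            have hfin' : volume (closedBall x (q:ℝ) ∩ A (lev x)) ≠ ⊤ :=
              (lt_of_le_of_lt (measure_mono inter_subset_left) measure_closedBall_lt_top).ne
            have heq := ENNReal.eq_sub_of_add_eq hfin' hsum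
            rw [heq]
            calc volume (closedBall x (q:ℝ)) - volume (closedBall x (q:ℝ) ∩ A (lev x))
                ≤ volume (closedBall x (q:ℝ)) - (1 - η₀) * volume (closedBall x (q:ℝ)) :=
                  tsub_le_tsub_left h1 _
              _ = (1 - (1 - η₀)) * volume (closedBall x (q:ℝ)) := by
                  conv_rhs => rw [ENNReal.sub_mul (fun _ _ => hcBtop), one_mul]
              _ ≤ η₀ * volume (closedBall x (q:ℝ)) := by
                  refine mul_le_mul_left ?_ _
                  rw [tsub_le_iff_right]
                  exact le_add_tsub
          have hvol : volume (closedBall x (q:ℝ)) = β * ENNReal.ofReal (d ^ (n+m)) := by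
            rw [hvol_cB x hq0.le, hβ]
            rw [show (q:ℝ) ^ (n+m) = (Real.sqrt ((n+m : ℕ) : ℝ)/2) ^ (n+m) * d ^ (n+m) by
              rw [← mul_pow]; congr 1; rw [← hqd]; ring]
            rw [ENNReal.ofReal_mul (by positivity)]
            ring
          calc volume (closedBall x (q:ℝ) \ A (lev x))
              ≤ η₀ * volume (closedBall x (q:ℝ)) := h2
            _ ≤ (η/β) * volume (closedBall x (q:ℝ)) :=
                mul_le_mul_left (min_le_left _ _) _
            _ = (η/β) * (β * ENNReal.ofReal (d ^ (n+m))) := by rw [hvol]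
            _ = η * ENNReal.ofReal (d ^ (n+m)) := by
                rw [← mul_assoc, ENNReal.div_mul_cancel hβ0 hβtop]
            _ = η * ENNReal.ofReal d ^ (n+m) := by
                rw [ENNReal.ofReal_pow hd0.le]
        · show Real.sqrt ((n+m : ℕ) : ℝ) * d / 2 ≤ ε
          rw [hqd]; exact hqε)
  have hune : u.Nonempty := by
    rcases u.eq_empty_or_nonempty with h | h
    · exfalso
      rw [h] at hucov
      simp only [mem_empty_iff_false, iUnion_of_empty, iUnion_false, iUnion_empty,
        diff_empty] at hucov
      rw [measure_diff_null hE0null] at hucov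
      have hvs : volume s = ENNReal.ofReal D ^ (n+m) := volume_openCube a D
      rw [hvs] at hucov
      exact (pow_ne_zero _ (by simp [ENNReal.ofReal_eq_zero, not_le, hD])) hucov
    · exact h
  obtain ⟨e, he⟩ := hucount.exists_eq_range hune
  set P : ℕ → Prop := fun j => ∀ i < j, e i ≠ e j with hPdef
  set cc : ℕ → EucSp (n+m) := fun j => (e j).1 with hccdef
  set dd : ℕ → ℝ := fun j => if P j then (e j).2 else 0 with hescdef
  have heu : ∀ j, e j ∈ u := fun j => he ▸ mem_range_self j
  have het : ∀ j, e j ∈ t := fun j => hut (heu j)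
  have hdd_pos : ∀ j, P j → dd j = (e j).2 := fun j h => by
    simp only [hescdef]; rw [if_pos h]
  have hdd_neg : ∀ j, ¬ P j → dd j = 0 := fun j h => by
    simp only [hescdef]; rw [if_neg h]
  have hcc_eq : ∀ j, cc j = (e j).1 := fun j => rfl
  have hdd0 : ∀ j, 0 ≤ dd j := by
    intro j; by_cases h : P j
    · rw [hdd_pos j h]; exact (het j).1.le
    · rw [hdd_neg j h]
  have hopen_subset : ∀ j, P j → openCube (cc j) (dd j) ⊆ s := by
    intro j h
    rw [hdd_pos j h, hcc_eq]
    exact openCube_subset_closedCube.trans (het j).2.1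
  have hopen_empty : ∀ j, ¬ P j → openCube (cc j) (dd j) = ∅ := by
    intro j h
    rw [hdd_neg j h]
    exact openCube_zero hNpos _
  have hsub : ∀ j, openCube (cc j) (dd j) ⊆ Q := by
    intro j; by_cases h : P j
    · exact (hopen_subset j h).trans hsQ
    · rw [hopen_empty j h]; exact empty_subset _
  have hdisj : Pairwise (Function.onFun Disjoint fun j => openCube (cc j) (dd j)) := by
    intro i j hij
    show Disjoint (openCube (cc i) (dd i)) (openCube (cc j) (dd j))
    by_cases hi : P i
    · by_cases hj : P j
      · have hne : e i ≠ e j := by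
          rcases lt_or_gt_of_ne hij with h | h
          · exact hj i h
          · exact fun hh => (hi j h) hh.symm
        have hd := hudisj (heu i) (heu j) hne
        rw [hdd_pos i hi, hdd_pos j hj, hcc_eq, hcc_eq]
        exact hd.mono openCube_subset_closedCube openCube_subset_closedCube
      · rw [hopen_empty j hj]; exact disjoint_empty _
    · rw [hopen_empty i hi]; exact empty_disjoint _
  have hcov : volume (Q \ ⋃ j, openCube (cc j) (dd j)) = 0 := by
    have hsubset : Q \ (⋃ j, openCube (cc j) (dd j)) ⊆
        ((Q \ s) ∪ E0) ∪ (((s \ E0) \ ⋃ p ∈ u, closedCube p.1 p.2) ∪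
          ⋃ j, (closedCube (e j).1 (e j).2 \ openCube (e j).1 (e j).2)) := by
      rintro x ⟨hxQ, hxU⟩
      by_cases hxs : x ∈ s
      swap
      · exact Or.inl (Or.inl ⟨hxQ, hxs⟩)
      by_cases hxE : x ∈ E0
      · exact Or.inl (Or.inr hxE)
      by_cases hxB : x ∈ ⋃ p ∈ u, closedCube p.1 p.2
      swap
      · exact Or.inr (Or.inl ⟨⟨hxs, hxE⟩, hxB⟩)
      right; right
      obtain ⟨p, hpu, hxp⟩ := mem_iUnion₂.1 hxB
      obtain ⟨j0, hj0⟩ : p ∈ range e := he ▸ hpu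
      have hex : ∃ i, e i = p := ⟨j0, hj0⟩
      set j := Nat.find hex with hjdef
      have hj : e j = p := Nat.find_spec hex
      have hPj : P j := by
        intro i hi
        rw [hj]
        exact Nat.find_min hex hi
      have hxnopen : x ∉ openCube (e j).1 (e j).2 := by
        intro hcon
        refine hxU (mem_iUnion.2 ⟨j, ?_⟩)
        rw [hdd_pos j hPj, hcc_eq]
        exact hcon
      refine mem_iUnion.2 ⟨j, ⟨?_, hxnopen⟩⟩
      rw [hj]
      exact hxp
    refine measure_mono_null hsubset ?_
    refine measure_union_null (measure_union_null ?_ hE0null) (measure_union_null hucov ?_)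
    · exact volume_closedCube_diff_openCube a D
    · exact measure_iUnion_null fun j => volume_closedCube_diff_openCube _ _
  set S : ℕ → Set (EucSp (n+m)) := fun j => openCube (cc j) (dd j) ∩ A (lev (cc j)) with hSdef
  have hSmeas : ∀ j, MeasurableSet (S j) := fun j => measurableSet_openCube.inter (hAmeas _)
  have hSdisj : Pairwise (Function.onFun Disjoint S) := fun i j hij =>
    ((hdisj hij).mono inter_subset_left inter_subset_left)
  have key : ∀ j, hContent n (f '' openCube (cc j) (dd j)) * ENNReal.ofReal (dd j) ^ m ≤
      C * (1-η)⁻¹ * (∫⁻ y in S j, g y)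
        + C * ENNReal.ofReal (3*δ) * volume (openCube (cc j) (dd j)) := by
    intro j
    by_cases hPj : P j
    swap
    · rw [hopen_empty j hPj]
      simp [hContent_empty hn]
    obtain ⟨hd0, hcs, hxA, hcont, hdens⟩ := het j
    have hSeq : S j = openCube (e j).1 (e j).2 ∩ A (lev (e j).1) := by
      simp only [hSdef]
      rw [hdd_pos j hPj]
    rw [hdd_pos j hPj, hcc_eq j]
    have h1 : hContent n (f '' openCube (e j).1 (e j).2)
        ≤ psiC n f Q (e j).1 (Real.sqrt ((n+m : ℕ) : ℝ) * (e j).2 / 2) :=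
      hContent_mono (image_mono (subset_inter (openCube_subset_ball hNpos)
        (openCube_subset_closedCube.trans (hcs.trans hsQ))))
    have h1η : (1-η) ≠ 0 := (tsub_pos_iff_lt.2 hη1).ne'
    have h1ηtop : (1-η) ≠ ⊤ := (lt_of_le_of_lt tsub_le_self ENNReal.one_lt_top).ne
    have h4 : g (e j).1 + ENNReal.ofReal (2*δ)
        ≤ ENNReal.ofReal ((lev (e j).1 : ℝ) * δ) + ENNReal.ofReal (3*δ) := by
      have hup : g (e j).1 < ENNReal.ofReal (((lev (e j).1 : ℝ) + 1) * δ) := hxA.2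
      have hsplit : ENNReal.ofReal (((lev (e j).1 : ℝ) + 1) * δ)
          = ENNReal.ofReal ((lev (e j).1 : ℝ) * δ) + ENNReal.ofReal δ := by
        rw [← ENNReal.ofReal_add (by positivity) hδ.le]
        congr 1; ring
      calc g (e j).1 + ENNReal.ofReal (2*δ)
          ≤ ENNReal.ofReal (((lev (e j).1 : ℝ) + 1) * δ) + ENNReal.ofReal (2*δ) :=
            add_le_add_left hup.le _
        _ = ENNReal.ofReal ((lev (e j).1 : ℝ) * δ) + (ENNReal.ofReal δ + ENNReal.ofReal (2*δ)) := by
            rw [hsplit, add_assoc]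
        _ = ENNReal.ofReal ((lev (e j).1 : ℝ) * δ) + ENNReal.ofReal (3*δ) := by
            rw [← ENNReal.ofReal_add hδ.le (by positivity)]
            congr 1; ring
    have hSj : volume (closedCube (e j).1 (e j).2 ∩ A (lev (e j).1)) ≤ volume (S j) := by
      have hsub2 : closedCube (e j).1 (e j).2 ∩ A (lev (e j).1) ⊆
          S j ∪ (closedCube (e j).1 (e j).2 \ openCube (e j).1 (e j).2) := by
        rintro y ⟨hy1, hy2⟩
        by_cases hyo : y ∈ openCube (e j).1 (e j).2
        · left; rw [hSeq]; exact ⟨hyo, hy2⟩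
        · right; exact ⟨hy1, hyo⟩
      calc volume (closedCube (e j).1 (e j).2 ∩ A (lev (e j).1))
          ≤ volume (S j ∪ (closedCube (e j).1 (e j).2 \ openCube (e j).1 (e j).2)) :=
            measure_mono hsub2
        _ ≤ volume (S j) + volume (closedCube (e j).1 (e j).2 \ openCube (e j).1 (e j).2) :=
            measure_union_le _ _
        _ = volume (S j) := by rw [volume_closedCube_diff_openCube, add_zero]
    have hv : ENNReal.ofReal (e j).2 ^ (n+m) ≤ (1-η)⁻¹ * volume (S j) := by
      have hh := hdens.trans hSj
      calc ENNReal.ofReal (e j).2 ^ (n+m)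
          = (1-η)⁻¹ * ((1-η) * ENNReal.ofReal (e j).2 ^ (n+m)) := by
            rw [← mul_assoc, ENNReal.inv_mul_cancel h1η h1ηtop, one_mul]
        _ ≤ (1-η)⁻¹ * volume (S j) := mul_le_mul_right hh _
    have hint : ENNReal.ofReal ((lev (e j).1 : ℝ) * δ) * volume (S j) ≤ ∫⁻ y in S j, g y := by
      rw [← setLIntegral_const (S j) (ENNReal.ofReal ((lev (e j).1 : ℝ) * δ))]
      refine setLIntegral_mono hgm fun y hy => ?_
      rw [hSeq] at hy
      exact hAg _ y hy.2
    have h5 : ENNReal.ofReal ((lev (e j).1 : ℝ) * δ) * ENNReal.ofReal (e j).2 ^ (n+m)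
        ≤ (1-η)⁻¹ * ∫⁻ y in S j, g y := by
      calc ENNReal.ofReal ((lev (e j).1 : ℝ) * δ) * ENNReal.ofReal (e j).2 ^ (n+m)
          ≤ ENNReal.ofReal ((lev (e j).1 : ℝ) * δ) * ((1-η)⁻¹ * volume (S j)) :=
            mul_le_mul_right hv _
        _ = (1-η)⁻¹ * (ENNReal.ofReal ((lev (e j).1 : ℝ) * δ) * volume (S j)) := by ring
        _ ≤ (1-η)⁻¹ * ∫⁻ y in S j, g y := mul_le_mul_right hint _
    calc hContent n (f '' openCube (e j).1 (e j).2) * ENNReal.ofReal (e j).2 ^ m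
        ≤ (g (e j).1 + ENNReal.ofReal (2*δ)) *
            (unitBallVol n * ENNReal.ofReal (Real.sqrt ((n+m : ℕ) : ℝ) * (e j).2 / 2) ^ n) *
            ENNReal.ofReal (e j).2 ^ m := mul_le_mul_left (h1.trans hcont) _
      _ = (g (e j).1 + ENNReal.ofReal (2*δ)) * (C * ENNReal.ofReal (e j).2 ^ (n+m)) := by
          rw [mul_assoc, const_id hd0.le]
      _ ≤ (ENNReal.ofReal ((lev (e j).1 : ℝ) * δ) + ENNReal.ofReal (3*δ)) *
            (C * ENNReal.ofReal (e j).2 ^ (n+m)) := mul_le_mul_left h4 _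
      _ = C * (ENNReal.ofReal ((lev (e j).1 : ℝ) * δ) * ENNReal.ofReal (e j).2 ^ (n+m))
            + C * ENNReal.ofReal (3*δ) * ENNReal.ofReal (e j).2 ^ (n+m) := by ring
      _ ≤ C * ((1-η)⁻¹ * ∫⁻ y in S j, g y)
            + C * ENNReal.ofReal (3*δ) * ENNReal.ofReal (e j).2 ^ (n+m) :=
          add_le_add_left (mul_le_mul_right h5 _) _
      _ = C * (1-η)⁻¹ * (∫⁻ y in S j, g y)
            + C * ENNReal.ofReal (3*δ) * volume (openCube (e j).1 (e j).2) := by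
          rw [← volume_openCube (e j).1 (e j).2, ← mul_assoc]
  calc hnmContent n m f Q
      ≤ ∑' j, hContent n (f '' openCube (cc j) (dd j)) * ENNReal.ofReal (dd j) ^ m := by
        refine iInf_le_of_le cc (iInf_le_of_le dd ?_)
        rw [iInf_pos hdd0, iInf_pos hsub, iInf_pos hdisj, iInf_pos hcov]
    _ ≤ ∑' j, (C * (1-η)⁻¹ * (∫⁻ y in S j, g y)
          + C * ENNReal.ofReal (3*δ) * volume (openCube (cc j) (dd j))) :=
        ENNReal.tsum_le_tsum key
    _ = C * (1-η)⁻¹ * (∑' j, ∫⁻ y in S j, g y)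
          + C * ENNReal.ofReal (3*δ) * (∑' j, volume (openCube (cc j) (dd j))) := by
        rw [Summable.tsum_add ENNReal.summable ENNReal.summable, ENNReal.tsum_mul_left, ENNReal.tsum_mul_left]
    _ ≤ C * (1-η)⁻¹ * (∫⁻ x in Q, g x) + C * ENNReal.ofReal (3*δ) * volume Q := by
        refine add_le_add (mul_le_mul_right ?_ _) (mul_le_mul_right ?_ _)
        · rw [← lintegral_iUnion hSmeas hSdisj g]
          exact lintegral_mono_set (iUnion_subset fun j => (inter_subset_left).trans (hsub j))
        · rw [← measure_iUnion hdisj (fun j => measurableSet_openCube)]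
          exact measure_mono (iUnion_subset hsub)
    _ = C * ((1 - η)⁻¹ * (∫⁻ x in Q, g x) + ENNReal.ofReal (3 * δ) * volume Q) := by ring

end SectionD2

-- Section E : final assembly
section SectionE

theorem stmt11' {n m : ℕ} {X : Type*} [MetricSpace X]
    (a : EucSp (n + m)) (D : ℝ) (hD : 0 < D) (Q : Set (EucSp (n + m)))
    (hQ : Q = closedCube a D)
    (f : EucSp (n + m) → X) (hf : ∃ L : ℝ≥0, LipschitzOnWith L f Q) :
    hnmContent n m f Q ≤
        unitBallVol n / 2 ^ n * ((n + m : ℕ) : ℝ≥0∞) ^ ((n : ℝ) / 2) *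
          ∫⁻ x in Q, lowerDensity n f Q x ∧
      unitBallVol n / 2 ^ n * ((n + m : ℕ) : ℝ≥0∞) ^ ((n : ℝ) / 2) *
          ∫⁻ x in Q, lowerDensity n f Q x ≤
        unitBallVol n / 2 ^ n * ((n + m : ℕ) : ℝ≥0∞) ^ ((n : ℝ) / 2) *
          ∫⁻ x in Q, upperDensity n f Q x := by
  constructor
  swap
  · refine mul_le_mul_right (lintegral_mono fun x => ?_) _
    exact liminf_le_limsup
  rcases Nat.eq_zero_or_pos n with hn0 | hn
  · -- n = 0 : right-hand side is infinite
    subst hn0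
    have hld : ∀ x, lowerDensity 0 f Q x = (∞ : ℝ≥0∞) := by
      intro x
      rw [lowerDensity]
      have hfun : (fun r : ℝ => hContent 0 (f '' (ball x r ∩ Q)) /
          (unitBallVol 0 * ENNReal.ofReal r ^ 0)) = fun _ => (∞ : ℝ≥0∞) := by
        funext r
        rw [hContent_zero_eq_top, pow_zero, mul_one,
          ENNReal.top_div_of_ne_top (unitBallVol_lt_top 0).ne]
      rw [hfun, liminf_const]
    have hvolQ : volume Q ≠ 0 := by
      rw [hQ, volume_closedCube]
      exact pow_ne_zero _ (by simp [ENNReal.ofReal_eq_zero, not_le, hD])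
    have hint : ∫⁻ x in Q, lowerDensity 0 f Q x = ∞ := by
      rw [lintegral_congr hld, setLIntegral_const, ENNReal.top_mul hvolQ]
    rw [hint, ENNReal.mul_top ?hC0]
    · exact le_top
    case hC0 =>
      have hexp : ((0:ℕ) : ℝ) / 2 = 0 := by norm_num
      rw [hexp, ENNReal.rpow_zero, mul_one]
      exact (ENNReal.div_pos (unitBallVol_pos 0).ne'
        (by simp : (2:ℝ≥0∞)^(0:ℕ) ≠ ∞)).ne'
  · -- n ≥ 1
    subst hQ
    set C : ℝ≥0∞ := unitBallVol n / 2 ^ n * ((n + m : ℕ) : ℝ≥0∞) ^ ((n : ℝ) / 2) with hC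
    have hNpos : 0 < n + m := lt_of_lt_of_le hn (Nat.le_add_right n m)
    have hC0 : C ≠ 0 := by
      refine mul_ne_zero (ENNReal.div_pos (unitBallVol_pos n).ne'
        (ENNReal.pow_ne_top (by simp))).ne' ?_
      exact (ENNReal.rpow_pos (by exact_mod_cast hNpos) (by simp)).ne'
    have hCtop : C ≠ ∞ := by
      refine ENNReal.mul_ne_top (ENNReal.div_lt_top (unitBallVol_lt_top n).ne
        (pow_ne_zero _ (by norm_num))).ne ?_
      exact ENNReal.rpow_ne_top_of_nonneg (by positivity) (by simp)
    set I0 := ∫⁻ x in closedCube a D, gTil n f (closedCube a D) x with hI0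
    have hIle : I0 ≤ ∫⁻ x in closedCube a D, lowerDensity n f (closedCube a D) x :=
      lintegral_mono fun x => gTil_le_lowerDensity hn f _ x
    refine le_trans ?_ (mul_le_mul_right hIle C)
    -- goal : hnmContent ≤ C * I0
    rcases eq_or_ne I0 ∞ with hI | hI
    · rw [hI, ENNReal.mul_top hC0]; exact le_top
    refine ENNReal.le_of_forall_pos_le_add fun ε hε hfin => ?_
    set K := C * I0 with hK
    have hKfin : K ≠ ∞ := hfin.ne
    -- choice of η
    have hε2 : (ε : ℝ≥0∞)/2 ≠ 0 :=
      (ENNReal.div_pos (by exact_mod_cast hε.ne') (by norm_num)).ne'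
    set η : ℝ≥0∞ := min (1/2) ((ε : ℝ≥0∞)/2 / (2*K+1)) with hη
    have hη12 : η ≤ 1/2 := min_le_left _ _
    have hη0 : 0 < η := by
      refine lt_min (by norm_num) (ENNReal.div_pos hε2 ?_)
      exact ENNReal.add_ne_top.2 ⟨ENNReal.mul_ne_top (by norm_num) hKfin, by norm_num⟩
    have hη1 : η < 1 := lt_of_le_of_lt hη12 (by norm_num)
    have hηK : 2 * η * K ≤ (ε : ℝ≥0∞) / 2 := by
      calc 2 * η * K ≤ 2 * ((ε : ℝ≥0∞)/2 / (2*K+1)) * K :=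
            mul_le_mul_left (mul_le_mul_right (min_le_right _ _) 2) K
        _ = (ε : ℝ≥0∞)/2 / (2*K+1) * (2*K) := by ring
        _ ≤ (ε : ℝ≥0∞)/2 / (2*K+1) * (2*K+1) := mul_le_mul_right le_self_add _
        _ = (ε : ℝ≥0∞)/2 := by
            refine ENNReal.div_mul_cancel ?_ ?_
            · exact (lt_of_lt_of_le one_pos le_add_self).ne'
            · exact ENNReal.add_ne_top.2 ⟨ENNReal.mul_ne_top (by norm_num) hKfin, by norm_num⟩
    -- choice of δ
    set W : ℝ≥0∞ := C * volume (closedCube a D) + 1 with hW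
    have hW0 : W ≠ 0 := (lt_of_lt_of_le one_pos le_add_self).ne'
    have hWtop : W ≠ ∞ := by
      refine ENNReal.add_ne_top.2 ⟨ENNReal.mul_ne_top hCtop ?_, by norm_num⟩
      rw [volume_closedCube]
      exact ENNReal.pow_ne_top ENNReal.ofReal_ne_top
    set c1 : ℝ≥0∞ := (ε : ℝ≥0∞)/2 / W with hc1
    have hc10 : c1 ≠ 0 := (ENNReal.div_pos hε2 hWtop).ne'
    have hc1top : c1 ≠ ∞ := by
      refine (ENNReal.div_lt_top ?_ hW0).ne
      exact (ENNReal.div_lt_top ENNReal.coe_ne_top (by norm_num)).ne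
    set δ : ℝ := c1.toReal / 3 with hδdef
    have hδ0 : 0 < δ := by
      have := ENNReal.toReal_pos hc10 hc1top
      rw [hδdef]; linarith
    have hofReal : ENNReal.ofReal (3*δ) = c1 := by
      rw [hδdef, show 3 * (c1.toReal/3) = c1.toReal by ring, ENNReal.ofReal_toReal hc1top]
    have hcore := core_estimate hn a hD f hδ0 hη0 hη1 hI
    calc hnmContent n m f (closedCube a D)
        ≤ C * ((1-η)⁻¹ * I0 + ENNReal.ofReal (3*δ) * volume (closedCube a D)) := hcore
      _ = C * (1-η)⁻¹ * I0 + c1 * (C * volume (closedCube a D)) := by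
          rw [hofReal]; ring
      _ ≤ (K + (ε : ℝ≥0∞)/2) + (ε : ℝ≥0∞)/2 := by
          refine add_le_add ?_ ?_
          · calc C * (1-η)⁻¹ * I0 ≤ C * (1 + 2*η) * I0 :=
                mul_le_mul_left (mul_le_mul_right (inv_one_sub_le hη12) C) I0
              _ = K + 2 * η * K := by rw [hK]; ring
              _ ≤ K + (ε : ℝ≥0∞)/2 := add_le_add_right hηK K
          · calc c1 * (C * volume (closedCube a D))
                ≤ c1 * W := mul_le_mul_right (le_self_add.trans_eq hW.symm) c1
              _ = (ε : ℝ≥0∞)/2 := ENNReal.div_mul_cancel hW0 hWtop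
      _ = K + (ε : ℝ≥0∞) := by rw [add_assoc, ENNReal.add_halves]

end SectionE


/-- Proposition elllem2: for a Lipschitz map `f : Q → X` on a cube
`Q ⊆ ℝ^{n+m}`,
`ℋ^{n,m}_∞(f,Q) ≤ (ω_n/2^n)(n+m)^{n/2} ∫_Q Θ_*^n(f,x) dx
               ≤ (ω_n/2^n)(n+m)^{n/2} ∫_Q Θ^{*n}(f,x) dx`. -/
theorem stmt11 {n m : ℕ} {X : Type*} [MetricSpace X]
    (a : EucSp (n + m)) (D : ℝ) (hD : 0 < D) (Q : Set (EucSp (n + m)))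
    (hQ : Q = closedCube a D)
    (f : EucSp (n + m) → X) (hf : ∃ L : ℝ≥0, LipschitzOnWith L f Q) :
    hnmContent n m f Q ≤
        unitBallVol n / 2 ^ n * ((n + m : ℕ) : ℝ≥0∞) ^ ((n : ℝ) / 2) *
          ∫⁻ x in Q, lowerDensity n f Q x ∧
      unitBallVol n / 2 ^ n * ((n + m : ℕ) : ℝ≥0∞) ^ ((n : ℝ) / 2) *
          ∫⁻ x in Q, lowerDensity n f Q x ≤
        unitBallVol n / 2 ^ n * ((n + m : ℕ) : ℝ≥0∞) ^ ((n : ℝ) / 2) *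
          ∫⁻ x in Q, upperDensity n f Q x := by
  exact stmt11' a D hD Q hQ f hf

end
end

section
/- Let D ⊂ ℝ^k be a cube or a ball and f : D → ℓ^∞ an L-Lipschitz map. Let A = {x ∈ D : Df(x) = 0}, where Df denotes the component-wise derivative of f (defined at almost every point). Then there is a constant C(k) depending only on k such that diam(f(D)) ≤ C(k) · L · ℋ^k(D \ A)^{1/k}. -/
open MeasureTheory Metric Set Filter
open scoped ENNReal NNReal Topology

noncomputable section

lemma oneDim {φ : ℝ → ℝ} {Λ : ℝ} (hΛ : 0 ≤ Λ)
    (hLip : ∀ s ∈ Icc (0:ℝ) 1, ∀ t ∈ Icc (0:ℝ) 1, |φ s - φ t| ≤ Λ * |s - t|)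
    {W : Set ℝ} (hW : ∀ t ∈ Icc (0:ℝ) 1, t ∉ W → HasDerivWithinAt φ 0 (Icc 0 1) t) :
    |φ 1 - φ 0| ≤ Λ * (volume (W ∩ Icc (0:ℝ) 1)).toReal := by
  set m := (volume (W ∩ Icc (0:ℝ) 1)).toReal with hm
  have hmfin : volume (W ∩ Icc (0:ℝ) 1) ≠ ⊤ := by
    refine ne_of_lt (lt_of_le_of_lt (measure_mono inter_subset_right) ?_)
    rw [Real.volume_Icc]; exact ENNReal.ofReal_lt_top
  -- it suffices to prove the bound with any ε > 0 slack
  have key : ∀ ε : ℝ, 0 < ε → |φ 1 - φ 0| ≤ Λ * m + ε := by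
    intro ε hε
    set η := ε / (Λ + 2) with hηdef
    have hη : 0 < η := div_pos hε (by linarith)
    -- outer regularity
    have hlt : volume (W ∩ Icc (0:ℝ) 1) < volume (W ∩ Icc (0:ℝ) 1) + ENNReal.ofReal η :=
      ENNReal.lt_add_right hmfin (by simpa using hη)
    obtain ⟨U, hUW, hUopen, hUvol⟩ :=
      Set.exists_isOpen_lt_of_lt (W ∩ Icc (0:ℝ) 1) _ hlt
    have hUfin : volume U ≠ ⊤ :=
      (hUvol.trans (ENNReal.add_lt_top.mpr ⟨hmfin.lt_top, ENNReal.ofReal_lt_top⟩)).ne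
    set ν : ℝ → ℝ := fun t => (volume (U ∩ Ioc (0:ℝ) t)).toReal with hνdef
    have hνfin : ∀ t, volume (U ∩ Ioc (0:ℝ) t) ≠ ⊤ :=
      fun t => ne_of_lt (lt_of_le_of_lt (measure_mono inter_subset_left) hUfin.lt_top)
    have hνmono : ∀ {s t : ℝ}, s ≤ t → ν s ≤ ν t := by
      intro s t hst
      exact ENNReal.toReal_mono (hνfin t)
        (measure_mono (inter_subset_inter_right _ (Ioc_subset_Ioc_right hst)))
    have hνlip : ∀ {s t : ℝ}, s ≤ t → ν t ≤ ν s + (t - s) := by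
      intro s t hst
      have h1 : volume (U ∩ Ioc (0:ℝ) t) ≤ volume (U ∩ Ioc (0:ℝ) s) + volume (Ioc s t) := by
        refine le_trans (measure_mono ?_) (measure_union_le _ _)
        rintro x ⟨hxU, hx0, hxt⟩
        rcases le_or_gt x s with h | h
        · exact Or.inl ⟨hxU, hx0, h⟩
        · exact Or.inr ⟨h, hxt⟩
      rw [Real.volume_Ioc] at h1
      calc ν t ≤ (volume (U ∩ Ioc (0:ℝ) s) + ENNReal.ofReal (t - s)).toReal :=
            ENNReal.toReal_mono (by simp [ENNReal.add_eq_top, hνfin s]) h1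
        _ = ν s + (t - s) := by
            rw [ENNReal.toReal_add (hνfin s) ENNReal.ofReal_ne_top,
              ENNReal.toReal_ofReal (by linarith)]
    have hνcont : Continuous ν := by
      refine (LipschitzWith.of_dist_le_mul (K := 1) fun s t => ?_).continuous
      rw [Real.dist_eq, Real.dist_eq, NNReal.coe_one, one_mul]
      rcases le_total s t with h | h
      · rw [abs_sub_comm s t, abs_of_nonneg (by linarith : (0:ℝ) ≤ t - s),
          abs_of_nonpos (by linarith [hνmono h] : ν s - ν t ≤ 0)]
        have := hνlip h; linarith
      · rw [abs_of_nonneg (by linarith : (0:ℝ) ≤ s - t),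
          abs_of_nonneg (by linarith [hνmono h] : (0:ℝ) ≤ ν s - ν t)]
        have := hνlip h; linarith
    have hφcont : ContinuousOn φ (Icc (0:ℝ) 1) := by
      refine LipschitzOnWith.continuousOn (K := Λ.toNNReal)
        (lipschitzOnWith_iff_dist_le_mul.mpr ?_)
      intro s hs t ht
      rw [Real.dist_eq, Real.dist_eq, Real.coe_toNNReal Λ hΛ]
      exact hLip s hs t ht
    set T : Set ℝ := {t ∈ Icc (0:ℝ) 1 | |φ t - φ 0| ≤ Λ * ν t + η * t} with hTdef
    have hTclosed : IsClosed T := by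
      have : T = Icc (0:ℝ) 1 ∩
          (fun t => |φ t - φ 0| - (Λ * ν t + η * t)) ⁻¹' Iic (0:ℝ) := by
        ext t; simp [hTdef, sub_nonpos]
      rw [this]
      refine ContinuousOn.preimage_isClosed_of_isClosed ?_ isClosed_Icc isClosed_Iic
      exact ((hφcont.sub continuousOn_const).abs).sub
        (((continuous_const.mul hνcont).continuousOn).add (continuous_const.mul continuous_id).continuousOn)
    have hT0 : (0:ℝ) ∈ T := by
      refine ⟨⟨le_refl _, by norm_num⟩, ?_⟩
      simp [hνdef]
    have hTbdd : BddAbove T := ⟨1, fun t ht => ht.1.2⟩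
    set c := sSup T with hcdef
    have hcT : c ∈ T := hTclosed.csSup_mem ⟨0, hT0⟩ hTbdd
    have hc01 : c ∈ Icc (0:ℝ) 1 := hcT.1
    have hc1 : c = 1 := by
      by_contra hne
      have hclt : c < 1 := lt_of_le_of_ne hc01.2 hne
      -- in both cases we find t ∈ T with c < t
      have step : ∃ t ∈ T, c < t := by
        by_cases hcU : c ∈ U
        · obtain ⟨δ, hδ, hball⟩ := Metric.isOpen_iff.1 hUopen c hcU
          refine ⟨min 1 (c + δ/2), ?_, lt_min hclt (by linarith)⟩
          set t := min 1 (c + δ/2) with htdef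
          have hct : c < t := lt_min hclt (by linarith)
          have ht1 : t ≤ 1 := min_le_left _ _
          have ht0 : (0:ℝ) ≤ t := le_min (by norm_num) (by linarith [hc01.1])
          have htc2 : t - c ≤ δ/2 := by
            have : t ≤ c + δ/2 := min_le_right _ _; linarith
          have hsub : Ioc c t ⊆ U := by
            intro s hs
            apply hball
            rw [Metric.mem_ball, Real.dist_eq, abs_of_pos (by linarith [hs.1] : (0:ℝ) < s - c)]
            have := hs.2; linarith
          have hνadd : ν t = ν c + (t - c) := by
            have hdisj : Disjoint (U ∩ Ioc (0:ℝ) c) (U ∩ Ioc c t) :=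
              (Set.Ioc_disjoint_Ioc_of_le le_rfl).mono inter_subset_right inter_subset_right
            have hun : U ∩ Ioc (0:ℝ) t = (U ∩ Ioc (0:ℝ) c) ∪ (U ∩ Ioc c t) := by
              rw [← inter_union_distrib_left, Set.Ioc_union_Ioc_eq_Ioc hc01.1 hct.le]
            have hUIoc : U ∩ Ioc c t = Ioc c t := inter_eq_self_of_subset_right hsub
            rw [hνdef]
            simp only [hun, hUIoc]
            have hdisj2 : Disjoint (U ∩ Ioc (0:ℝ) c) (Ioc c t) :=
              (Set.Ioc_disjoint_Ioc_of_le le_rfl).mono_left inter_subset_right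
            rw [measure_union hdisj2 measurableSet_Ioc, Real.volume_Ioc,
              ENNReal.toReal_add (hνfin c) ENNReal.ofReal_ne_top,
              ENNReal.toReal_ofReal (by linarith : (0:ℝ) ≤ t - c)]
          have hφt : |φ t - φ c| ≤ Λ * (t - c) := by
            have := hLip t ⟨ht0, ht1⟩ c hc01
            rwa [abs_of_pos (by linarith : (0:ℝ) < t - c)] at this
          have : |φ t - φ 0| ≤ Λ * ν t + η * t := by
            have h1 : |φ t - φ 0| ≤ |φ t - φ c| + |φ c - φ 0| := abs_sub_le _ _ _
            have h2 := hcT.2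
            have h3 : η * c ≤ η * t := by nlinarith [hη.le]
            rw [hνadd]; nlinarith
          exact ⟨⟨ht0, ht1⟩, this⟩
        · have hcW : c ∉ W := fun hc => hcU (hUW ⟨hc, hc01⟩)
          have hder := hW c hc01 hcW
          rw [hasDerivWithinAt_iff_isLittleO] at hder
          have hev := hder.def hη
          rw [Filter.eventually_iff, Metric.mem_nhdsWithin_iff] at hev
          obtain ⟨δ, hδ, hball⟩ := hev
          refine ⟨min 1 (c + δ/2), ?_, lt_min hclt (by linarith)⟩
          set t := min 1 (c + δ/2) with htdef
          have hct : c < t := lt_min hclt (by linarith)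
          have ht1 : t ≤ 1 := min_le_left _ _
          have ht0 : (0:ℝ) ≤ t := le_min (by norm_num) (by linarith [hc01.1])
          have htc2 : t - c ≤ δ/2 := by
            have : t ≤ c + δ/2 := min_le_right _ _; linarith
          have htmem : t ∈ Metric.ball c δ ∩ Icc (0:ℝ) 1 := by
            constructor
            · rw [Metric.mem_ball, Real.dist_eq, abs_of_pos (by linarith : (0:ℝ) < t - c)]
              linarith
            · exact ⟨ht0, ht1⟩
          have hφt : |φ t - φ c| ≤ η * (t - c) := by
            have := hball htmem
            simp only [Set.mem_setOf_eq, smul_zero, sub_zero, Real.norm_eq_abs] at this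
            rwa [abs_of_pos (by linarith : (0:ℝ) < t - c)] at this
          have : |φ t - φ 0| ≤ Λ * ν t + η * t := by
            have h1 : |φ t - φ 0| ≤ |φ t - φ c| + |φ c - φ 0| := abs_sub_le _ _ _
            have h2 := hcT.2
            have h3 : ν c ≤ ν t := hνmono hct.le
            nlinarith [hη.le, hΛ]
          exact ⟨⟨ht0, ht1⟩, this⟩
      obtain ⟨t, htT, hct⟩ := step
      exact absurd (le_csSup hTbdd htT) (not_le.mpr hct)
    -- conclude
    have h1T := hcT; rw [hc1] at h1T
    have hν1 : ν 1 ≤ m + η := by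
      have h1 : volume (U ∩ Ioc (0:ℝ) 1) ≤ volume U := measure_mono inter_subset_left
      have h2 : (volume U).toReal ≤ m + η := by
        have := ENNReal.toReal_mono
          (by simp [ENNReal.add_eq_top, hmfin] : volume (W ∩ Icc (0:ℝ) 1) + ENNReal.ofReal η ≠ ⊤)
          hUvol.le
        rwa [ENNReal.toReal_add hmfin ENNReal.ofReal_ne_top,
          ENNReal.toReal_ofReal hη.le] at this
      exact le_trans (ENNReal.toReal_mono hUfin h1) h2
    have hfinal := h1T.2
    have : |φ 1 - φ 0| ≤ Λ * (m + η) + η * 1 := by nlinarith [hνmono (le_refl (1:ℝ)), hΛ]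
    have hηε : Λ * η + η ≤ ε := by
      have : η * (Λ + 2) = ε := by rw [hηdef]; exact div_mul_cancel₀ _ (by linarith)
      nlinarith [hη.le, hΛ]
    nlinarith
  -- pass to the limit ε → 0
  by_contra hcon
  push_neg at hcon
  obtain ⟨ε, hε, hlt⟩ : ∃ ε > 0, Λ * m + ε < |φ 1 - φ 0| :=
    ⟨(|φ 1 - φ 0| - Λ * m)/2, by linarith, by linarith⟩
  exact absurd (key ε hε) (not_le.mpr hlt)

lemma slem (k : ℕ) (hk : 1 ≤ k) {a : ℝ} (ha : 0 < a) :
    ∫⁻ s in Ioc a 1, ENNReal.ofReal s⁻¹ * (ENNReal.ofReal (s ^ k))⁻¹ ≤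
      ENNReal.ofReal (a ^ (-(k:ℝ))) * (k : ℝ≥0∞)⁻¹ := by
  rcases lt_or_ge (1:ℝ) a with hal | hal
  · rw [Set.Ioc_eq_empty (by linarith : ¬ a < 1), Measure.restrict_empty, lintegral_zero_measure]
    exact zero_le
  · set r : ℝ := -(k:ℝ) - 1 with hr
    have hcongr : ∫⁻ s in Ioc a 1, ENNReal.ofReal s⁻¹ * (ENNReal.ofReal (s ^ k))⁻¹
        = ∫⁻ s in Ioc a 1, ENNReal.ofReal (s ^ r) := by
      refine setLIntegral_congr_fun measurableSet_Ioc (fun s hs => ?_)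
      have hs0 : 0 < s := lt_trans ha hs.1
      rw [← ENNReal.ofReal_inv_of_pos (pow_pos hs0 k), ← ENNReal.ofReal_mul (by positivity)]
      congr 1
      rw [hr]
      have : -(k:ℝ) - 1 = -(((k+1:ℕ)):ℝ) := by push_cast; ring
      rw [this, Real.rpow_neg hs0.le, Real.rpow_natCast, pow_succ, mul_inv, mul_comm]
    rw [hcongr]
    have hint : IntegrableOn (fun s => s ^ r) (Ioc a 1) volume := by
      refine (ContinuousOn.integrableOn_Icc ?_).mono_set Ioc_subset_Icc_self
      exact continuousOn_id.rpow_const fun x hx => Or.inl (ne_of_gt (lt_of_lt_of_le ha hx.1))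
    rw [← ofReal_integral_eq_lintegral_ofReal hint
      ((ae_restrict_iff' measurableSet_Ioc).mpr (ae_of_all _ fun s hs =>
        Real.rpow_nonneg (lt_trans ha hs.1).le r))]
    have hval : ∫ s in Ioc a 1, s ^ r = (a ^ (-(k:ℝ)) - 1) / k := by
      rw [← intervalIntegral.integral_of_le hal]
      have hkR : (k:ℝ) ≠ 0 := Nat.cast_ne_zero.mpr (by omega)
      rw [integral_rpow (Or.inr ⟨by
          simp only [hr]; intro h
          exact hkR (by linarith)
        , by
          rw [Set.uIcc_of_le hal]
          intro h0
          exact absurd h0.1 (not_le.mpr ha)⟩)]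
      have hr1 : r + 1 = -(k:ℝ) := by rw [hr]; ring
      rw [hr1, Real.one_rpow]
      have hkne : (k:ℝ) ≠ 0 := Nat.cast_ne_zero.mpr (by omega)
      rw [div_neg, neg_div', neg_sub]
    rw [hval]
    have hkpos : (0:ℝ) < k := Nat.cast_pos.mpr (by omega)
    have h1 : (a ^ (-(k:ℝ)) - 1) / k ≤ a ^ (-(k:ℝ)) / k :=
      (div_le_div_iff_of_pos_right hkpos).mpr (by linarith)
    refine le_trans (ENNReal.ofReal_le_ofReal h1) ?_
    rw [ENNReal.ofReal_div_of_pos hkpos,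
      ENNReal.ofReal_natCast, ENNReal.div_eq_inv_mul, mul_comm]

lemma potlem (k : ℕ) (hk : 1 ≤ k) (x : EucSp k) (E : Set (EucSp k))
    (hE : MeasurableSet E) (hEfin : volume E ≠ ⊤) :
    ∫⁻ w in E, (ENNReal.ofReal ‖w - x‖) ^ ((1:ℝ) - k) ≤
      (volume (ball (0 : EucSp k) 1) * 2^k + 1) * (volume E) ^ ((k:ℝ)⁻¹) := by
  set g : EucSp k → ℝ≥0∞ := fun w => (ENNReal.ofReal ‖w - x‖) ^ ((1:ℝ) - k) with hg
  set ω := volume (ball (0 : EucSp k) 1) with hω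
  have hkR : (0:ℝ) < k := Nat.cast_pos.mpr (by omega)
  have anti : ∀ (u v : ℝ≥0∞), 0 < u → u ≤ v → v ^ ((1:ℝ)-k) ≤ u ^ ((1:ℝ)-k) := by
    intro u v hu huv
    have h1k : (1:ℝ) - k = -((k:ℝ)-1) := by ring
    rw [h1k, ENNReal.rpow_neg, ENNReal.rpow_neg]
    have hk1 : (1:ℝ) ≤ k := Nat.one_le_cast.mpr hk
    exact ENNReal.inv_le_inv.mpr (ENNReal.rpow_le_rpow huv (by linarith))
  by_cases hE0 : volume E = 0
  · rw [setLIntegral_measure_zero _ _ hE0]; exact zero_le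
  · set ρ := (volume E).toReal ^ ((k:ℝ)⁻¹) with hρ
    have hEtR : 0 < (volume E).toReal := ENNReal.toReal_pos hE0 hEfin
    have hρpos : 0 < ρ := Real.rpow_pos_of_pos hEtR _
    have hρk : ρ ^ (k:ℕ) = (volume E).toReal := by
      rw [hρ, ← Real.rpow_natCast ((volume E).toReal ^ ((k:ℝ)⁻¹)) k, ← Real.rpow_mul hEtR.le,
        inv_mul_cancel₀ (ne_of_gt hkR), Real.rpow_one]
    have hofρ : ENNReal.ofReal ρ = (volume E) ^ ((k:ℝ)⁻¹) := by
      rw [hρ, ← ENNReal.ofReal_rpow_of_pos hEtR, ENNReal.ofReal_toReal hEfin]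
    have hvolE : volume E = (ENNReal.ofReal ρ) ^ ((k:ℝ)) := by
      rw [← ENNReal.ofReal_toReal hEfin, ← hρk, ENNReal.ofReal_rpow_of_pos hρpos,
        Real.rpow_natCast]
    -- split the integral
    have hsplit : ∫⁻ w in E, g w ≤
        (∫⁻ w in E ∩ closedBall x ρ, g w) + ∫⁻ w in E \ closedBall x ρ, g w := by
      refine le_trans (lintegral_mono_set ?_) (lintegral_union_le _ _ _)
      rw [inter_union_diff]
    -- part 2
    have hpart2 : ∫⁻ w in E \ closedBall x ρ, g w ≤ ENNReal.ofReal ρ := by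
      have hb : ∀ w ∈ E \ closedBall x ρ, g w ≤ (ENNReal.ofReal ρ) ^ ((1:ℝ)-k) := by
        intro w hw
        have : ρ < ‖w - x‖ := by
          have := hw.2
          rw [mem_closedBall, dist_eq_norm] at this
          linarith [not_le.mp this]
        exact anti _ _ (ENNReal.ofReal_pos.mpr hρpos) (ENNReal.ofReal_le_ofReal this.le)
      calc ∫⁻ w in E \ closedBall x ρ, g w
          ≤ ∫⁻ _ in E \ closedBall x ρ, (ENNReal.ofReal ρ) ^ ((1:ℝ)-k) :=
            setLIntegral_mono' (hE.diff measurableSet_closedBall) hb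
        _ = (ENNReal.ofReal ρ) ^ ((1:ℝ)-k) * volume (E \ closedBall x ρ) :=
            setLIntegral_const _ _
        _ ≤ (ENNReal.ofReal ρ) ^ ((1:ℝ)-k) * volume E :=
            mul_le_mul_right (measure_mono diff_subset) _
        _ = ENNReal.ofReal ρ := by
            rw [hvolE, ← ENNReal.rpow_add _ _ (by simp [hρpos] : ENNReal.ofReal ρ ≠ 0)
              ENNReal.ofReal_ne_top]
            norm_num
    -- part 1 : annuli
    set A : ℕ → Set (EucSp k) :=
      fun j => closedBall x ((2⁻¹:ℝ)^j * ρ) \ closedBall x ((2⁻¹:ℝ)^(j+1) * ρ) with hA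
    have hcover : E ∩ closedBall x ρ ⊆ {x} ∪ ⋃ j, A j := by
      rintro w ⟨hwE, hwB⟩
      by_cases hwx : w = x
      · exact Or.inl hwx
      · right
        have ht : 0 < ‖w - x‖ := by
          rw [norm_pos_iff]; exact sub_ne_zero.mpr hwx
        have hex : ∃ j:ℕ, (2⁻¹:ℝ)^(j+1) * ρ < ‖w - x‖ := by
          obtain ⟨n, hn⟩ := exists_pow_lt_of_lt_one (div_pos ht hρpos) (by norm_num : (2⁻¹:ℝ) < 1)
          refine ⟨n, ?_⟩
          have h1 : (2⁻¹:ℝ)^(n+1) ≤ (2⁻¹:ℝ)^n :=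
            pow_le_pow_of_le_one (by norm_num) (by norm_num) (Nat.le_succ n)
          have := (lt_div_iff₀ hρpos).mp hn
          nlinarith
        set j := Nat.find hex with hj
        have hjlt := Nat.find_spec hex
        refine mem_iUnion.mpr ⟨j, ?_, ?_⟩
        · rw [mem_closedBall, dist_eq_norm]
          rcases Nat.eq_zero_or_pos j with h0 | hpos
          · rw [h0, pow_zero, one_mul]
            rwa [mem_closedBall, dist_eq_norm] at hwB
          · have := Nat.find_min hex (Nat.sub_lt hpos one_pos)
            push_neg at this
            have hj1 : j - 1 + 1 = j := Nat.succ_pred_eq_of_pos hpos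
            rwa [hj1] at this
        · rw [mem_closedBall, dist_eq_norm]
          exact not_le.mpr hjlt
    have hAbound : ∀ j : ℕ, ∫⁻ w in A j, g w ≤ 2^(k-1) * (2⁻¹:ℝ≥0∞)^j * ENNReal.ofReal ρ * ω := by
      intro j
      set a := (2⁻¹:ℝ)^(j+1) * ρ with ha
      set b := (2⁻¹:ℝ)^j * ρ with hb
      have hapos : 0 < a := by positivity
      have hbpos : 0 < b := by positivity
      have hgb : ∀ w ∈ A j, g w ≤ (ENNReal.ofReal a) ^ ((1:ℝ)-k) := by
        intro w hw
        have : a < ‖w - x‖ := by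
          have := hw.2
          rw [mem_closedBall, dist_eq_norm] at this
          linarith [not_le.mp this]
        exact anti _ _ (ENNReal.ofReal_pos.mpr hapos) (ENNReal.ofReal_le_ofReal this.le)
      have hmeas : MeasurableSet (A j) :=
        measurableSet_closedBall.diff measurableSet_closedBall
      calc ∫⁻ w in A j, g w ≤ ∫⁻ _ in A j, (ENNReal.ofReal a) ^ ((1:ℝ)-k) :=
            setLIntegral_mono' hmeas hgb
        _ = (ENNReal.ofReal a) ^ ((1:ℝ)-k) * volume (A j) := setLIntegral_const _ _
        _ ≤ (ENNReal.ofReal a) ^ ((1:ℝ)-k) * volume (closedBall x b) :=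
            mul_le_mul_right (measure_mono diff_subset) _
        _ = (ENNReal.ofReal a) ^ ((1:ℝ)-k) * (ENNReal.ofReal (b ^ k) * ω) := by
            rw [Measure.addHaar_closedBall _ _ hbpos.le, finrank_euclideanSpace_fin]
        _ = ENNReal.ofReal (a ^ ((1:ℝ)-k) * b ^ k) * ω := by
            rw [ENNReal.ofReal_rpow_of_pos hapos,
              ENNReal.ofReal_mul (Real.rpow_nonneg hapos.le _)]
            ring
        _ = 2^(k-1) * (2⁻¹:ℝ≥0∞)^j * ENNReal.ofReal ρ * ω := by
            have hgen : ∀ aa : ℝ, 0 < aa → aa ^ ((1:ℝ)-k) * (2*aa) ^ k = 2^k * aa := by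
              intro aa haa
              rw [Real.rpow_sub haa, Real.rpow_one, Real.rpow_natCast, mul_pow]
              field_simp
            have hreal : a ^ ((1:ℝ)-k) * b ^ k = 2^(k-1) * (2⁻¹:ℝ)^j * ρ := by
              have hba : b = 2 * a := by
                rw [ha, hb, pow_succ]; ring
              have h2k : (2:ℝ)^(k-1) * 2 = 2^k := by
                rw [← pow_succ, Nat.sub_add_cancel hk]
              rw [hba, hgen a hapos, ha, pow_succ, ← h2k]
              ring
            have e2 : ENNReal.ofReal (2:ℝ) = 2 := by norm_num
            have e2i : ENNReal.ofReal (2⁻¹:ℝ) = 2⁻¹ := by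
              rw [ENNReal.ofReal_inv_of_pos (by norm_num), e2]
            rw [hreal, ENNReal.ofReal_mul (by positivity), ENNReal.ofReal_mul (by positivity),
              ENNReal.ofReal_pow (by norm_num : (0:ℝ) ≤ 2), ENNReal.ofReal_pow
              (by norm_num : (0:ℝ) ≤ 2⁻¹), e2, e2i]
    have hsingleton : volume ({x} : Set (EucSp k)) = 0 := by
      have h1 : ({x} : Set (EucSp k)) ⊆ closedBall x 0 := by
        intro w hw; rw [hw]; simp
      refine le_antisymm (le_trans (measure_mono h1) ?_) (zero_le)
      rw [Measure.addHaar_closedBall _ _ le_rfl, finrank_euclideanSpace_fin,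
        zero_pow (by omega : k ≠ 0)]
      simp
    have hpart1 : ∫⁻ w in E ∩ closedBall x ρ, g w ≤ 2^k * ENNReal.ofReal ρ * ω := by
      calc ∫⁻ w in E ∩ closedBall x ρ, g w ≤ ∫⁻ w in ({x} ∪ ⋃ j, A j), g w :=
            lintegral_mono_set hcover
        _ ≤ (∫⁻ w in ({x} : Set (EucSp k)), g w) + ∫⁻ w in ⋃ j, A j, g w :=
            lintegral_union_le _ _ _
        _ ≤ 0 + ∑' j, ∫⁻ w in A j, g w := by
            gcongr
            · rw [setLIntegral_measure_zero _ _ hsingleton]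
            · exact lintegral_iUnion_le _ _
        _ ≤ ∑' j, 2^(k-1) * (2⁻¹:ℝ≥0∞)^j * ENNReal.ofReal ρ * ω := by
            rw [zero_add]; exact ENNReal.tsum_le_tsum hAbound
        _ = 2^(k-1) * ENNReal.ofReal ρ * ω * ∑' j, (2⁻¹:ℝ≥0∞)^j := by
            rw [← ENNReal.tsum_mul_left]
            congr 1; ext j; ring
        _ = 2^k * ENNReal.ofReal ρ * ω := by
            rw [ENNReal.tsum_geometric]
            have h2 : (1 - 2⁻¹ : ℝ≥0∞)⁻¹ = 2 := by
              simp [ENNReal.one_sub_inv_two]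
            rw [h2]
            have h2k : (2:ℝ≥0∞)^(k-1) * 2 = 2^k := by
              rw [← pow_succ, Nat.sub_add_cancel hk]
            rw [← h2k]; ring
    calc ∫⁻ w in E, g w ≤ (∫⁻ w in E ∩ closedBall x ρ, g w) + ∫⁻ w in E \ closedBall x ρ, g w :=
          hsplit
      _ ≤ 2^k * ENNReal.ofReal ρ * ω + ENNReal.ofReal ρ := add_le_add hpart1 hpart2
      _ = (ω * 2^k + 1) * ENNReal.ofReal ρ := by ring
      _ = (ω * 2^k + 1) * (volume E) ^ ((k:ℝ)⁻¹) := by rw [hofρ]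

lemma avg (k : ℕ) (hk : 1 ≤ k) (E : Set (EucSp k)) (hE : MeasurableSet E)
    (hEfin : volume E ≠ ⊤) (x c₀ : EucSp k) (ρ M : ℝ) (hρ : 0 < ρ) (hMpos : 0 < M)
    (hM : ∀ z ∈ closedBall c₀ ρ, ‖z - x‖ ≤ M) :
    ∫⁻ z in closedBall c₀ ρ,
        (volume ({s : ℝ | x + s • (z - x) ∈ E} ∩ Ioc (0:ℝ) 1) * ENNReal.ofReal ‖z - x‖)
      ≤ (ENNReal.ofReal M)^k * (k:ℝ≥0∞)⁻¹ * (volume (ball (0:EucSp k) 1) * 2^k + 1)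
          * (volume E) ^ ((k:ℝ)⁻¹) := by
  set B := closedBall c₀ ρ with hB
  set ω := volume (ball (0:EucSp k) 1) with hω
  set F : EucSp k → ℝ → ℝ≥0∞ :=
    fun z s => E.indicator (1 : EucSp k → ℝ≥0∞) (x + s • (z - x)) * ENNReal.ofReal ‖z - x‖ with hF
  -- Step A: rewrite the section volume as an integral
  have hcount : ∀ z : EucSp k, volume ({s : ℝ | x + s • (z - x) ∈ E} ∩ Ioc (0:ℝ) 1)
      * ENNReal.ofReal ‖z - x‖ = ∫⁻ s in Ioc (0:ℝ) 1, F z s := by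
    intro z
    have hγ : Measurable (fun s : ℝ => x + s • (z - x)) := by
      exact (continuous_const.add (continuous_id.smul continuous_const)).measurable
    have hpre : MeasurableSet {s : ℝ | x + s • (z - x) ∈ E} := hγ hE
    have h1 : (∫⁻ s in Ioc (0:ℝ) 1, {s : ℝ | x + s • (z - x) ∈ E}.indicator (1 : ℝ → ℝ≥0∞) s)
        = volume ({s : ℝ | x + s • (z - x) ∈ E} ∩ Ioc (0:ℝ) 1) := by
      rw [lintegral_indicator_one hpre, Measure.restrict_apply hpre]
    rw [← h1, ← lintegral_mul_const _ ((measurable_one.indicator hpre))]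
    rfl
  have hJ : ∫⁻ z in B,
      (volume ({s : ℝ | x + s • (z - x) ∈ E} ∩ Ioc (0:ℝ) 1) * ENNReal.ofReal ‖z - x‖)
      = ∫⁻ s in Ioc (0:ℝ) 1, ∫⁻ z in B, F z s := by
    rw [setLIntegral_congr_fun measurableSet_closedBall (fun z _ => hcount z)]
    refine lintegral_lintegral_swap ?_
    have hg : Measurable (fun p : EucSp k × ℝ => x + p.2 • (p.1 - x)) :=
      (continuous_const.add (continuous_snd.smul (continuous_fst.sub continuous_const))).measurable
    exact (((measurable_one.indicator hE).comp hg).mul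
      ((continuous_fst.sub continuous_const).norm.measurable.ennreal_ofReal)).aemeasurable
  -- the indicator kernel on the product
  set S : Set (ℝ × EucSp k) := {p | p.2 ∈ E ∧ ‖p.2 - x‖ ≤ p.1 * M} with hS
  have hSmeas : MeasurableSet S := by
    refine MeasurableSet.inter (measurable_snd hE) ?_
    exact isClosed_le ((continuous_snd.sub continuous_const).norm)
      (continuous_fst.mul continuous_const) |>.measurableSet
  set G : ℝ × EucSp k → ℝ≥0∞ := S.indicator (fun q => ENNReal.ofReal ‖q.2 - x‖) with hG
  have hGmeas : Measurable G :=
    Measurable.indicator ((continuous_snd.sub continuous_const).norm.measurable.ennreal_ofReal) hSmeas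
  set ψ : ℝ → ℝ≥0∞ := fun s => ENNReal.ofReal s⁻¹ * (ENNReal.ofReal (s ^ k))⁻¹ with hψ
  -- Step D : inner bound via change of variables
  have hinner : ∀ s ∈ Ioc (0:ℝ) 1, (∫⁻ z in B, F z s) ≤ ψ s * ∫⁻ w, G (s, w) := by
    intro s hs
    have hs0 : 0 < s := hs.1
    set T : EucSp k → EucSp k := fun z => x + s • (z - x) with hT
    have hTnorm : ∀ z, ‖T z - x‖ = s * ‖z - x‖ := by
      intro z
      have : T z - x = s • (z - x) := by rw [hT]; module
      rw [this, norm_smul, Real.norm_eq_abs, abs_of_pos hs0]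
    have hpt : ∀ z ∈ B, F z s ≤ ENNReal.ofReal s⁻¹ * G (s, T z) := by
      intro z hz
      by_cases hTz : T z ∈ E
      · have hmem : (s, T z) ∈ S := by
          refine ⟨hTz, ?_⟩
          rw [hTnorm z]
          exact mul_le_mul_of_nonneg_left (hM z hz) hs0.le
        have hzx : ENNReal.ofReal ‖z - x‖ = ENNReal.ofReal s⁻¹ * ENNReal.ofReal ‖T z - x‖ := by
          rw [hTnorm z, ← ENNReal.ofReal_mul (by positivity)]
          congr 1
          field_simp
        rw [hF]
        simp only [Set.indicator_of_mem hTz, Pi.one_apply, one_mul, hG,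
          Set.indicator_of_mem hmem]
        rw [hzx]
        rw [Set.indicator_of_mem (show x + s • (z - x) ∈ E from hTz), Pi.one_apply, one_mul]
      · rw [hF]
        simp only [Set.indicator_of_notMem (show x + s • (z - x) ∉ E from hTz), zero_mul]
        exact zero_le
    have hTmeas : Measurable T :=
      (continuous_const.add (continuous_const_smul s |>.comp
        (continuous_id.sub continuous_const))).measurable
    have hGT : Measurable fun z => G (s, T z) :=
      hGmeas.comp ((measurable_const.prodMk hTmeas))
    calc ∫⁻ z in B, F z s ≤ ∫⁻ z in B, ENNReal.ofReal s⁻¹ * G (s, T z) :=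
          setLIntegral_mono' measurableSet_closedBall hpt
      _ ≤ ∫⁻ z, ENNReal.ofReal s⁻¹ * G (s, T z) := setLIntegral_le_lintegral _ _
      _ = ENNReal.ofReal s⁻¹ * ∫⁻ z, G (s, T z) :=
          lintegral_const_mul' _ _ ENNReal.ofReal_ne_top
      _ = ENNReal.ofReal s⁻¹ * ((ENNReal.ofReal (s^k))⁻¹ * ∫⁻ w, G (s, w)) := by
          congr 1
          have hTdecomp : T = (fun w => (x - s • x) + w) ∘ (fun z : EucSp k => s • z) := by
            funext z
            show x + s • (z - x) = (x - s • x) + s • z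
            module
          have hfr : Module.finrank ℝ (EucSp k) = k := finrank_euclideanSpace_fin
          have hmap : Measure.map T volume
              = ENNReal.ofReal |((s:ℝ) ^ k)⁻¹| • volume := by
            rw [hTdecomp, ← Measure.map_map (measurable_const_add _) (measurable_const_smul s),
              Measure.map_addHaar_smul (μ := volume) hs0.ne', Measure.map_smul,
              map_add_left_eq_self, hfr]
          have := lintegral_map (hGmeas.comp (measurable_const.prodMk measurable_id)) hTmeas
            (μ := volume) (f := fun w => G (s, w))
          rw [← this, hmap, lintegral_smul_measure]
          congr 1
          rw [abs_of_pos (by positivity), ENNReal.ofReal_inv_of_pos (by positivity)]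
      _ = ψ s * ∫⁻ w, G (s, w) := by rw [hψ]; ring
  -- Step E/F : swap again
  have hψmeas : Measurable ψ :=
    (measurable_id.inv.ennreal_ofReal).mul ((measurable_id.pow_const k).ennreal_ofReal.inv)
  have hstep2 : ∫⁻ s in Ioc (0:ℝ) 1, ψ s * ∫⁻ w, G (s, w)
      = ∫⁻ w, ∫⁻ s in Ioc (0:ℝ) 1, ψ s * G (s, w) := by
    calc ∫⁻ s in Ioc (0:ℝ) 1, ψ s * ∫⁻ w, G (s, w)
        = ∫⁻ s in Ioc (0:ℝ) 1, ∫⁻ w, ψ s * G (s, w) := by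
          refine setLIntegral_congr_fun measurableSet_Ioc (fun s _ => ?_)
          exact (lintegral_const_mul (ψ s) (hGmeas.comp measurable_prodMk_left)).symm
      _ = ∫⁻ w, ∫⁻ s in Ioc (0:ℝ) 1, ψ s * G (s, w) := by
          refine lintegral_lintegral_swap ?_
          exact ((hψmeas.comp measurable_fst).mul hGmeas).aemeasurable
  -- Step G : pointwise bound in w
  set cM : ℝ≥0∞ := (ENNReal.ofReal M)^k * (k:ℝ≥0∞)⁻¹ with hcM
  have hwbound : ∀ w : EucSp k, (∫⁻ s in Ioc (0:ℝ) 1, ψ s * G (s, w))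
      ≤ E.indicator (fun w' => cM * (ENNReal.ofReal ‖w' - x‖) ^ ((1:ℝ) - k)) w := by
    intro w
    by_cases hwE : w ∈ E
    · set t := ‖w - x‖ with ht
      have ht0 : 0 ≤ t := norm_nonneg _
      rw [Set.indicator_of_mem hwE]
      rcases eq_or_lt_of_le ht0 with ht0' | htpos
      · have hzero : ∀ s, ψ s * G (s, w) ≤ 0 := by
          intro s
          have hGz : G (s, w) = 0 := by
            rw [hG]
            by_cases hmem : (s,w) ∈ S
            · rw [Set.indicator_of_mem hmem]
              simp [← ht, ← ht0']
            · rw [Set.indicator_of_notMem hmem]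
          rw [hGz, mul_zero]
        calc ∫⁻ s in Ioc (0:ℝ) 1, ψ s * G (s, w) ≤ ∫⁻ _ in Ioc (0:ℝ) 1, 0 :=
              setLIntegral_mono' measurableSet_Ioc (fun s _ => hzero s)
          _ = 0 := lintegral_zero
          _ ≤ _ := zero_le
      · have hsub : ∀ s ∈ Ioc (0:ℝ) 1, ψ s * G (s,w)
            ≤ (Icc (t/M) 1).indicator (fun s => ψ s * ENNReal.ofReal t) s := by
          intro s hs
          by_cases hmem : (s, w) ∈ S
          · have hstM : t ≤ s * M := hmem.2
            have hsm : s ∈ Icc (t/M) 1 := ⟨(div_le_iff₀ hMpos).mpr hstM, hs.2⟩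
            rw [Set.indicator_of_mem hsm]
            have hGt : G (s,w) = ENNReal.ofReal t := by rw [hG, Set.indicator_of_mem hmem]
            rw [hGt]
          · have hGz : G (s,w) = 0 := by rw [hG, Set.indicator_of_notMem hmem]
            rw [hGz, mul_zero]
            exact zero_le
        calc ∫⁻ s in Ioc (0:ℝ) 1, ψ s * G (s, w)
            ≤ ∫⁻ s in Ioc (0:ℝ) 1, (Icc (t/M) 1).indicator (fun s => ψ s * ENNReal.ofReal t) s :=
              setLIntegral_mono' measurableSet_Ioc hsub
          _ ≤ ∫⁻ s, (Icc (t/M) 1).indicator (fun s => ψ s * ENNReal.ofReal t) s :=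
              setLIntegral_le_lintegral _ _
          _ = ∫⁻ s in Icc (t/M) 1, ψ s * ENNReal.ofReal t :=
              lintegral_indicator measurableSet_Icc _
          _ = ∫⁻ s in Ioc (t/M) 1, ψ s * ENNReal.ofReal t := by
              rw [← Measure.restrict_congr_set Ioc_ae_eq_Icc]
          _ = (∫⁻ s in Ioc (t/M) 1, ψ s) * ENNReal.ofReal t :=
              lintegral_mul_const' _ _ ENNReal.ofReal_ne_top
          _ ≤ (ENNReal.ofReal ((t/M) ^ (-(k:ℝ))) * (k:ℝ≥0∞)⁻¹) * ENNReal.ofReal t := by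
              gcongr
              exact slem k hk (div_pos htpos hMpos)
          _ = cM * (ENNReal.ofReal t) ^ ((1:ℝ) - k) := by
              have hre : (t/M) ^ (-(k:ℝ)) * t = M^k * t ^ ((1:ℝ) - k) := by
                rw [Real.rpow_neg (by positivity), Real.rpow_natCast, div_pow,
                  Real.rpow_sub htpos, Real.rpow_one, Real.rpow_natCast]
                field_simp
              rw [hcM, mul_comm (ENNReal.ofReal ((t/M) ^ (-(k:ℝ)))) ((k:ℝ≥0∞)⁻¹), mul_assoc,
                ← ENNReal.ofReal_mul (by positivity), hre,
                ENNReal.ofReal_mul (by positivity), ← ENNReal.ofReal_pow hMpos.le,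
                ENNReal.ofReal_pow hMpos.le, ← ENNReal.ofReal_rpow_of_pos htpos]
              ring
    · rw [Set.indicator_of_notMem hwE]
      have hzero : ∀ s, ψ s * G (s, w) ≤ 0 := by
        intro s
        have hGz : G (s, w) = 0 := by
          rw [hG, Set.indicator_of_notMem (fun hmem => hwE hmem.1)]
        rw [hGz, mul_zero]
      calc ∫⁻ s in Ioc (0:ℝ) 1, ψ s * G (s, w) ≤ ∫⁻ _ in Ioc (0:ℝ) 1, 0 :=
            setLIntegral_mono' measurableSet_Ioc (fun s _ => hzero s)
        _ = 0 := lintegral_zero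
  -- Step H : assemble
  have hcMne : cM ≠ ⊤ :=
    ENNReal.mul_ne_top (ENNReal.pow_ne_top ENNReal.ofReal_ne_top)
      (ENNReal.inv_ne_top.mpr (Nat.cast_ne_zero.mpr (by omega)))
  calc ∫⁻ z in B,
      (volume ({s : ℝ | x + s • (z - x) ∈ E} ∩ Ioc (0:ℝ) 1) * ENNReal.ofReal ‖z - x‖)
      = ∫⁻ s in Ioc (0:ℝ) 1, ∫⁻ z in B, F z s := hJ
    _ ≤ ∫⁻ s in Ioc (0:ℝ) 1, ψ s * ∫⁻ w, G (s, w) :=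
        setLIntegral_mono' measurableSet_Ioc hinner
    _ = ∫⁻ w, ∫⁻ s in Ioc (0:ℝ) 1, ψ s * G (s, w) := hstep2
    _ ≤ ∫⁻ w, E.indicator (fun w' => cM * (ENNReal.ofReal ‖w' - x‖) ^ ((1:ℝ) - k)) w :=
        lintegral_mono hwbound
    _ = ∫⁻ w in E, cM * (ENNReal.ofReal ‖w - x‖) ^ ((1:ℝ) - k) := lintegral_indicator hE _
    _ = cM * ∫⁻ w in E, (ENNReal.ofReal ‖w - x‖) ^ ((1:ℝ) - k) :=
        lintegral_const_mul' _ _ hcMne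
    _ ≤ cM * ((ω * 2^k + 1) * (volume E) ^ ((k:ℝ)⁻¹)) := by
        gcongr
        exact potlem k hk x E hE hEfin
    _ = (ENNReal.ofReal M)^k * (k:ℝ≥0∞)⁻¹ * (ω * 2^k + 1) * (volume E) ^ ((k:ℝ)⁻¹) := by
        rw [hcM]; ring

lemma coord_le_norm {k : ℕ} (v : EucSp k) (i : Fin k) : |v i| ≤ ‖v‖ := by
  rw [EuclideanSpace.norm_eq]
  have h1 : |v i| = Real.sqrt (|v i|^2) := by rw [Real.sqrt_sq_eq_abs, abs_abs]
  rw [h1]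
  apply Real.sqrt_le_sqrt
  have := Finset.single_le_sum (f := fun j => ‖v j‖^2) (fun j _ => by positivity)
    (Finset.mem_univ i)
  simpa [Real.norm_eq_abs, sq_abs] using this

/-- Lemma 5790: there is `C(k) > 0` such that for every cube or ball
`D ⊆ ℝ^k` and every `L`-Lipschitz `f : D → ℓ^∞`, with
`A = {x ∈ D : Df(x) = 0}` (component-wise derivative),
`diam (f(D)) ≤ C(k) L ℋ^k(D \ A)^{1/k}`. -/
theorem stmt15 (k : ℕ) :
    ∃ C : ℝ, 0 < C ∧
      ∀ (D : Set (EucSp k)),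
        ((∃ (c : EucSp k) (d : ℝ), 0 < d ∧ D = closedCube c d) ∨
          ∃ (c : EucSp k) (r : ℝ), 0 < r ∧ D = Metric.closedBall c r) →
        ∀ (f : EucSp k → LpInfty) (L : ℝ≥0), LipschitzOnWith L f D →
          ∀ (A : Set (EucSp k)),
            A = {x ∈ D | ∀ i : ℕ, HasFDerivWithinAt (fun y => f y i) (0 : EucSp k →L[ℝ] ℝ) D x} →
            EMetric.diam (f '' D) ≤
              ENNReal.ofReal (C * L) * volume (D \ A) ^ ((k : ℝ)⁻¹) := by
  rcases Nat.eq_zero_or_pos k with hk0 | hkpos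
  · subst hk0
    refine ⟨1, one_pos, ?_⟩
    intro D hD f L hf A hA
    have hsub : (f '' D).Subsingleton := by
      rintro p ⟨a, _, rfl⟩ q ⟨b, _, rfl⟩
      have hab : a = b := Subsingleton.elim a b
      rw [hab]
    rw [show EMetric.diam (f '' D) = 0 from EMetric.diam_subsingleton hsub]
    exact zero_le
  · have hk : 1 ≤ k := hkpos
    set ω := volume (ball (0 : EucSp k) 1) with hω
    have hω0 : ω ≠ 0 := (measure_ball_pos _ _ one_pos).ne'
    have hωtop : ω ≠ ⊤ := measure_ball_lt_top.ne
    set C₁ : ℝ≥0∞ := ω * 2^k + 1 with hC₁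
    set Kc : ℝ≥0∞ := (ENNReal.ofReal ((k:ℝ)+1))^k * (k:ℝ≥0∞)⁻¹ * C₁ * ω⁻¹ with hKc
    set C₃ : ℝ≥0∞ := 2 * Kc with hC₃
    have hC₁top : C₁ ≠ ⊤ := by
      rw [hC₁]
      exact ENNReal.add_ne_top.mpr ⟨ENNReal.mul_ne_top hωtop (by simp), by simp⟩
    have hC₃top : C₃ ≠ ⊤ := by
      rw [hC₃, hKc]
      refine ENNReal.mul_ne_top (by simp) ?_
      refine ENNReal.mul_ne_top (ENNReal.mul_ne_top (ENNReal.mul_ne_top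
        (ENNReal.pow_ne_top ENNReal.ofReal_ne_top)
        (ENNReal.inv_ne_top.mpr (Nat.cast_ne_zero.mpr (by omega)))) hC₁top)
        (ENNReal.inv_ne_top.mpr hω0)
    refine ⟨C₃.toReal + 1, by positivity, ?_⟩
    intro D hD f L hf A hA
    -- geometry of D
    obtain ⟨c₀, ρ₀, hρ₀, hBD, hconv, hDbig⟩ :
        ∃ c₀ ρ₀, 0 < ρ₀ ∧ closedBall c₀ ρ₀ ⊆ D ∧ Convex ℝ D ∧
          (∀ x ∈ D, ‖x - c₀‖ ≤ (k:ℝ) * ρ₀) := by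
      have hk1R : (1:ℝ) ≤ k := Nat.one_le_cast.mpr hk
      rcases hD with ⟨c, d, hd, rfl⟩ | ⟨c, r, hr, rfl⟩
      · refine ⟨c, d/2, by linarith, ?_, ?_, ?_⟩
        · intro z hz i
          have h1 : |(z - c) i| ≤ ‖z - c‖ := coord_le_norm _ _
          have h2 : ‖z - c‖ ≤ d/2 := by rwa [mem_closedBall, dist_eq_norm] at hz
          have h3 : (z - c) i = z i - c i := rfl
          rw [h3] at h1
          linarith
        · intro u hu v hv a b ha hb hab
          intro i
          have hui := hu i
          have hvi := hv i
          have happ : (a • u + b • v) i = a * u i + b * v i := rfl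
          have hc : c i = a * c i + b * c i := by rw [← add_mul, hab, one_mul]
          have hrw : (a • u + b • v) i - c i = a * (u i - c i) + b * (v i - c i) := by
            rw [happ]
            nth_rewrite 1 [hc]
            ring
          calc |(a • u + b • v) i - c i| = |a * (u i - c i) + b * (v i - c i)| := by rw [hrw]
            _ ≤ |a * (u i - c i)| + |b * (v i - c i)| := abs_add_le _ _
            _ = a * |u i - c i| + b * |v i - c i| := by
                rw [abs_mul, abs_mul, abs_of_nonneg ha, abs_of_nonneg hb]
            _ ≤ a * (d/2) + b * (d/2) := by gcongr
            _ = d/2 := by rw [← add_mul, hab, one_mul]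
        · intro x hx
          have h1 : ‖x - c‖ = Real.sqrt (∑ i, ‖(x - c) i‖^2) := EuclideanSpace.norm_eq _
          have h2 : ∑ i, ‖(x-c) i‖^2 ≤ (k:ℝ) * (d/2)^2 := by
            calc ∑ i, ‖(x-c) i‖^2 ≤ ∑ _i : Fin k, (d/2:ℝ)^2 := by
                  refine Finset.sum_le_sum fun i _ => ?_
                  have h3 : (x - c) i = x i - c i := rfl
                  rw [Real.norm_eq_abs, h3]
                  exact pow_le_pow_left₀ (abs_nonneg _) (hx i) 2
              _ = (k:ℝ) * (d/2)^2 := by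
                  rw [Finset.sum_const, Finset.card_fin, nsmul_eq_mul]
          calc ‖x - c‖ ≤ Real.sqrt ((k:ℝ) * (d/2)^2) := by
                rw [h1]; exact Real.sqrt_le_sqrt h2
            _ ≤ Real.sqrt (((k:ℝ) * (d/2))^2) := by
                apply Real.sqrt_le_sqrt
                nlinarith
            _ = (k:ℝ) * (d/2) := Real.sqrt_sq (by positivity)
      · refine ⟨c, r, hr, subset_rfl, convex_closedBall c r, ?_⟩
        intro x hx
        have h1 : ‖x - c‖ ≤ r := by rwa [mem_closedBall, dist_eq_norm] at hx
        calc ‖x - c‖ ≤ r := h1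
          _ ≤ (k:ℝ) * r := le_mul_of_one_le_left hr.le hk1R
    -- measure-theoretic setup
    set E' := toMeasurable volume (D \ A) with hE'def
    have hE'meas : MeasurableSet E' := measurableSet_toMeasurable _ _
    have hDAsub : D \ A ⊆ E' := subset_toMeasurable _ _
    have hE'vol : volume E' = volume (D \ A) := measure_toMeasurable _
    have hεfin : volume E' ≠ ⊤ := by
      rw [hE'vol]
      refine (lt_of_le_of_lt (measure_mono ?_)
        (measure_closedBall_lt_top (x := c₀) (r := (k:ℝ)*ρ₀))).ne
      intro x hx
      rw [mem_closedBall, dist_eq_norm]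
      exact hDbig x hx.1
    set ε1 := (volume E') ^ ((k:ℝ)⁻¹) with hε1
    have hε1fin : ε1 ≠ ⊤ := by
      rw [hε1]
      exact (ENNReal.rpow_lt_top_of_nonneg (by positivity) hεfin).ne
    have hMbound : ∀ x ∈ D, ∀ z ∈ closedBall c₀ ρ₀, ‖z - x‖ ≤ ((k:ℝ)+1) * ρ₀ := by
      intro x hx z hz
      have h1 : ‖z - c₀‖ ≤ ρ₀ := by rwa [mem_closedBall, dist_eq_norm] at hz
      have h2 : ‖x - c₀‖ ≤ (k:ℝ)*ρ₀ := hDbig x hx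
      calc ‖z - x‖ = ‖(z - c₀) - (x - c₀)‖ := by congr 1; abel
        _ ≤ ‖z - c₀‖ + ‖x - c₀‖ := norm_sub_le _ _
        _ ≤ ((k:ℝ)+1) * ρ₀ := by linarith
    -- segment estimate
    have seg : ∀ i : ℕ, ∀ p ∈ D, ∀ z ∈ D, ENNReal.ofReal |f z i - f p i|
        ≤ (L:ℝ≥0∞) * (volume ({s : ℝ | p + s • (z - p) ∈ E'} ∩ Ioc (0:ℝ) 1)
            * ENNReal.ofReal ‖z - p‖) := by
      intro i p hp z hz
      set γ : ℝ → EucSp k := fun s => p + s • (z - p) with hγ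
      have hγD : ∀ s ∈ Icc (0:ℝ) 1, γ s ∈ D := fun s hs => hconv.add_smul_sub_mem hp hz hs
      set φ : ℝ → ℝ := fun s => f (γ s) i with hφ
      have hLipφ : ∀ s ∈ Icc (0:ℝ) 1, ∀ t ∈ Icc (0:ℝ) 1,
          |φ s - φ t| ≤ ((L:ℝ) * ‖z - p‖) * |s - t| := by
        intro s hs t ht
        have h1 : |φ s - φ t| ≤ ‖f (γ s) - f (γ t)‖ := by
          have h0 := lp.norm_apply_le_norm ENNReal.top_ne_zero (f (γ s) - f (γ t)) i
          have h0' : (f (γ s) - f (γ t)) i = f (γ s) i - f (γ t) i := by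
            rw [lp.coeFn_sub]; rfl
          rw [h0', Real.norm_eq_abs] at h0
          exact h0
        have h2 : ‖f (γ s) - f (γ t)‖ ≤ (L:ℝ) * ‖γ s - γ t‖ := by
          have := lipschitzOnWith_iff_dist_le_mul.mp hf (γ s) (hγD s hs) (γ t) (hγD t ht)
          rwa [dist_eq_norm, dist_eq_norm] at this
        have h3 : ‖γ s - γ t‖ = |s - t| * ‖z - p‖ := by
          have h4 : γ s - γ t = (s - t) • (z - p) := by rw [hγ]; module
          rw [h4, norm_smul, Real.norm_eq_abs]
        calc |φ s - φ t| ≤ (L:ℝ) * ‖γ s - γ t‖ := le_trans h1 h2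
          _ = (L:ℝ)*‖z-p‖*|s-t| := by rw [h3]; ring
      have hW : ∀ t ∈ Icc (0:ℝ) 1, t ∉ {s : ℝ | γ s ∈ E'} → HasDerivWithinAt φ 0 (Icc 0 1) t := by
        intro t ht htW
        have hγtD : γ t ∈ D := hγD t ht
        have hγtA : γ t ∈ A := by
          by_contra hc
          exact htW (hDAsub ⟨hγtD, hc⟩)
        have hder : HasFDerivWithinAt (fun y => f y i) (0 : EucSp k →L[ℝ] ℝ) D (γ t) := by
          rw [hA] at hγtA
          exact hγtA.2 i
        have hγder : HasDerivWithinAt γ (z - p) (Icc (0:ℝ) 1) t := by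
          have h1 : HasDerivWithinAt (fun s : ℝ => s • (z - p)) ((1:ℝ) • (z - p))
              (Icc (0:ℝ) 1) t := (hasDerivWithinAt_id t _).smul_const (z - p)
          have h2 := h1.const_add p; rw [one_smul] at h2; exact h2
        have hcomp := hder.comp_hasDerivWithinAt t hγder (fun s hs => hγD s hs)
        have h3 := hcomp; rw [ContinuousLinearMap.zero_apply] at h3; exact h3
      have h1D := oneDim (by positivity) hLipφ hW
      have hφ1 : φ 1 = f z i := by
        have hg1 : γ 1 = z := by rw [hγ]; simp
        show f (γ 1) i = f z i
        rw [hg1]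
      have hφ0 : φ 0 = f p i := by
        have hg0 : γ 0 = p := by rw [hγ]; simp
        show f (γ 0) i = f p i
        rw [hg0]
      set W := {s : ℝ | γ s ∈ E'} with hWdef
      have hmfin : volume (W ∩ Icc (0:ℝ) 1) ≠ ⊤ := by
        refine (lt_of_le_of_lt (measure_mono inter_subset_right) ?_).ne
        rw [Real.volume_Icc]
        exact ENNReal.ofReal_lt_top
      have hm1 : volume (W ∩ Icc (0:ℝ) 1) ≤ volume (W ∩ Ioc (0:ℝ) 1) := by
        have hsub2 : W ∩ Icc (0:ℝ) 1 ⊆ (W ∩ Ioc (0:ℝ) 1) ∪ {0} := by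
          rintro u ⟨huW, hu0, hu1⟩
          rcases eq_or_lt_of_le hu0 with h | h
          · right; simp [← h]
          · left; exact ⟨huW, h, hu1⟩
        calc volume (W ∩ Icc (0:ℝ) 1) ≤ volume ((W ∩ Ioc (0:ℝ) 1) ∪ {0}) := measure_mono hsub2
          _ ≤ volume (W ∩ Ioc (0:ℝ) 1) + volume ({0}:Set ℝ) := measure_union_le _ _
          _ = volume (W ∩ Ioc (0:ℝ) 1) := by rw [Real.volume_singleton, add_zero]
      calc ENNReal.ofReal |f z i - f p i| = ENNReal.ofReal |φ 1 - φ 0| := by rw [hφ1, hφ0]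
        _ ≤ ENNReal.ofReal (((L:ℝ) * ‖z - p‖) * (volume (W ∩ Icc (0:ℝ) 1)).toReal) :=
            ENNReal.ofReal_le_ofReal h1D
        _ = (L:ℝ≥0∞) * ENNReal.ofReal ‖z - p‖ * volume (W ∩ Icc (0:ℝ) 1) := by
            rw [ENNReal.ofReal_mul (by positivity), ENNReal.ofReal_mul (by positivity),
              ENNReal.ofReal_coe_nnreal, ENNReal.ofReal_toReal hmfin]
        _ ≤ (L:ℝ≥0∞) * ENNReal.ofReal ‖z - p‖ * volume (W ∩ Ioc (0:ℝ) 1) := by gcongr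
        _ = (L:ℝ≥0∞) * (volume (W ∩ Ioc (0:ℝ) 1) * ENNReal.ofReal ‖z - p‖) := by ring
    -- measurability of the averaged quantity
    have hℓmeas : ∀ x' : EucSp k, Measurable (fun z : EucSp k =>
        volume ({s : ℝ | x' + s • (z - x') ∈ E'} ∩ Ioc (0:ℝ) 1) * ENNReal.ofReal ‖z - x'‖) := by
      intro x'
      have hprod : MeasurableSet {q : EucSp k × ℝ |
          (x' + q.2 • (q.1 - x') ∈ E') ∧ q.2 ∈ Ioc (0:ℝ) 1} := by
        refine MeasurableSet.inter ?_ (measurable_snd measurableSet_Ioc)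
        exact (continuous_const.add
          (continuous_snd.smul (continuous_fst.sub continuous_const))).measurable hE'meas
      have h1 := measurable_measure_prodMk_left (ν := volume) hprod
      have h2 : (fun z : EucSp k => volume ({s : ℝ | x' + s • (z - x') ∈ E'} ∩ Ioc (0:ℝ) 1))
          = fun z : EucSp k => volume (Prod.mk z ⁻¹' {q : EucSp k × ℝ |
              (x' + q.2 • (q.1 - x') ∈ E') ∧ q.2 ∈ Ioc (0:ℝ) 1}) := by
        funext z
        rfl
      exact (h2 ▸ h1).mul ((continuous_id.sub continuous_const).norm.measurable.ennreal_ofReal)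
    -- key pairwise estimate
    have hfr : Module.finrank ℝ (EucSp k) = k := finrank_euclideanSpace_fin
    have key : ∀ x ∈ D, ∀ y ∈ D, ∀ i : ℕ,
        ENNReal.ofReal |f x i - f y i| ≤ (L:ℝ≥0∞) * (C₃ * ε1) := by
      intro x hx y hy i
      set B := closedBall c₀ ρ₀ with hBdef
      set M := ((k:ℝ)+1)*ρ₀ with hMdef
      set ℓx : EucSp k → ℝ≥0∞ := fun z =>
        volume ({s : ℝ | x + s • (z - x) ∈ E'} ∩ Ioc (0:ℝ) 1) * ENNReal.ofReal ‖z - x‖ with hℓx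
      set ℓy : EucSp k → ℝ≥0∞ := fun z =>
        volume ({s : ℝ | y + s • (z - y) ∈ E'} ∩ Ioc (0:ℝ) 1) * ENNReal.ofReal ‖z - y‖ with hℓy
      have hMpos : 0 < M := by rw [hMdef]; positivity
      have havgx := avg k hk E' hE'meas hεfin x c₀ ρ₀ M hρ₀ hMpos
        (fun z hz => hMbound x hx z hz)
      have havgy := avg k hk E' hE'meas hεfin y c₀ ρ₀ M hρ₀ hMpos
        (fun z hz => hMbound y hy z hz)
      rw [← hω, ← hC₁, ← hε1] at havgx havgy
      have hvolB : volume B = ENNReal.ofReal (ρ₀^k) * ω := by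
        rw [hBdef, Measure.addHaar_closedBall _ _ hρ₀.le, hfr, hω]
      have hvolB0 : volume B ≠ 0 := by
        rw [hvolB]
        exact mul_ne_zero (ENNReal.ofReal_pos.mpr (by positivity)).ne' hω0
      have hvolBtop : volume B ≠ ⊤ := by
        rw [hvolB]
        exact ENNReal.mul_ne_top ENNReal.ofReal_ne_top hωtop
      have hRHS : (ENNReal.ofReal M)^k * (k:ℝ≥0∞)⁻¹ * C₁ * ε1 = Kc * ε1 * volume B := by
        have hcancel : ω⁻¹ * ω = 1 := ENNReal.inv_mul_cancel hω0 hωtop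
        have hMsplit : (ENNReal.ofReal M)^k
            = (ENNReal.ofReal ((k:ℝ)+1))^k * ENNReal.ofReal (ρ₀^k) := by
          rw [hMdef, ENNReal.ofReal_mul (by positivity), mul_pow, ENNReal.ofReal_pow hρ₀.le]
        rw [hMsplit, hKc, hvolB]
        calc (ENNReal.ofReal ((k:ℝ)+1))^k * ENNReal.ofReal (ρ₀^k) * (k:ℝ≥0∞)⁻¹ * C₁ * ε1
            = (ENNReal.ofReal ((k:ℝ)+1))^k * (k:ℝ≥0∞)⁻¹ * C₁ * ε1 * ENNReal.ofReal (ρ₀^k)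
                * (ω⁻¹ * ω) := by rw [hcancel, mul_one]; ring
          _ = (ENNReal.ofReal ((k:ℝ)+1))^k * (k:ℝ≥0∞)⁻¹ * C₁ * ω⁻¹ * ε1
                * (ENNReal.ofReal (ρ₀^k) * ω) := by ring
      have hsum_int : ∫⁻ z in B, (ℓx z + ℓy z) ≤ C₃ * ε1 * volume B := by
        rw [lintegral_add_left (hℓmeas x)]
        calc (∫⁻ z in B, ℓx z) + ∫⁻ z in B, ℓy z
            ≤ Kc * ε1 * volume B + Kc * ε1 * volume B :=
              add_le_add (le_trans havgx (le_of_eq hRHS)) (le_trans havgy (le_of_eq hRHS))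
          _ = C₃ * ε1 * volume B := by rw [hC₃]; ring
      have hεC3fin : C₃ * ε1 ≠ ⊤ := ENNReal.mul_ne_top hC₃top hε1fin
      have hzex : ∀ δ : ℝ≥0∞, δ ≠ 0 → ∃ z ∈ B, ℓx z + ℓy z ≤ C₃ * ε1 + δ := by
        intro δ hδ0
        by_contra hcon
        push_neg at hcon
        have hlow : ∀ z ∈ B, C₃ * ε1 + δ ≤ ℓx z + ℓy z := fun z hz' => (hcon z hz').le
        have hlb := setLIntegral_mono' (μ := volume) (s := B) measurableSet_closedBall hlow
        rw [setLIntegral_const] at hlb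
        have hlt : (C₃ * ε1) * volume B < (C₃ * ε1 + δ) * volume B :=
          by rw [mul_comm _ (volume B), mul_comm _ (volume B)]; exact ENNReal.mul_lt_mul_right hvolB0 hvolBtop (ENNReal.lt_add_right hεC3fin hδ0)
        exact absurd (hlb.trans hsum_int) (not_le.mpr hlt)
      have hiz : ∀ δ : ℝ≥0∞, δ ≠ 0 →
          ENNReal.ofReal |f x i - f y i| ≤ (L:ℝ≥0∞) * (C₃ * ε1 + δ) := by
        intro δ h0
        obtain ⟨z, hzB, hzsum⟩ := hzex δ h0
        have hzD : z ∈ D := hBD hzB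
        have h1 := seg i x hx z hzD
        have h2 := seg i y hy z hzD
        calc ENNReal.ofReal |f x i - f y i|
            ≤ ENNReal.ofReal (|f z i - f x i| + |f z i - f y i|) := by
              apply ENNReal.ofReal_le_ofReal
              calc |f x i - f y i| ≤ |f x i - f z i| + |f z i - f y i| := abs_sub_le _ _ _
                _ = |f z i - f x i| + |f z i - f y i| := by rw [abs_sub_comm]
          _ = ENNReal.ofReal |f z i - f x i| + ENNReal.ofReal |f z i - f y i| :=
              ENNReal.ofReal_add (abs_nonneg _) (abs_nonneg _)
          _ ≤ (L:ℝ≥0∞) * ℓx z + (L:ℝ≥0∞) * ℓy z := add_le_add h1 h2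
          _ = (L:ℝ≥0∞) * (ℓx z + ℓy z) := by ring
          _ ≤ (L:ℝ≥0∞) * (C₃ * ε1 + δ) := by gcongr
      refine ENNReal.le_of_forall_pos_le_add ?_
      intro η hη hfin
      set δ : ℝ≥0∞ := ((L:ℝ≥0∞) + 1)⁻¹ * η with hδdef
      have hL1 : (L:ℝ≥0∞) + 1 ≠ 0 := by simp
      have hL1top : (L:ℝ≥0∞) + 1 ≠ ⊤ := by simp
      have hδ0 : δ ≠ 0 := by
        rw [hδdef]
        exact mul_ne_zero (ENNReal.inv_ne_zero.mpr hL1top) (by exact_mod_cast hη.ne')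
      have hLδ : (L:ℝ≥0∞) * δ ≤ η := by
        rw [hδdef]
        calc (L:ℝ≥0∞) * (((L:ℝ≥0∞) + 1)⁻¹ * η)
            ≤ ((L:ℝ≥0∞) + 1) * (((L:ℝ≥0∞) + 1)⁻¹ * η) := by gcongr; exact le_self_add
          _ = (((L:ℝ≥0∞) + 1) * ((L:ℝ≥0∞) + 1)⁻¹) * η := by ring
          _ = η := by rw [ENNReal.mul_inv_cancel hL1 hL1top, one_mul]
      calc ENNReal.ofReal |f x i - f y i| ≤ (L:ℝ≥0∞) * (C₃ * ε1 + δ) := hiz δ hδ0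
        _ = (L:ℝ≥0∞) * (C₃ * ε1) + (L:ℝ≥0∞) * δ := by ring
        _ ≤ (L:ℝ≥0∞) * (C₃ * ε1) + η := by gcongr
    -- conclude : diameter bound
    have hfinLC : (L:ℝ≥0∞) * (C₃ * ε1) ≠ ⊤ :=
      ENNReal.mul_ne_top ENNReal.coe_ne_top (ENNReal.mul_ne_top hC₃top hε1fin)
    refine EMetric.diam_le ?_
    rintro q1 ⟨x, hx, rfl⟩ q2 ⟨y, hy, rfl⟩
    have hbound : ∀ i : ℕ, ‖(f x - f y) i‖ ≤ ((L:ℝ≥0∞) * (C₃ * ε1)).toReal := by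
      intro i
      have h := key x hx y hy i
      have h2 : |f x i - f y i| ≤ ((L:ℝ≥0∞) * (C₃ * ε1)).toReal :=
        (ENNReal.ofReal_le_iff_le_toReal hfinLC).mp h
      have h3 : (f x - f y) i = f x i - f y i := by rw [lp.coeFn_sub]; rfl
      rw [h3, Real.norm_eq_abs]
      exact h2
    have hnorm : ‖f x - f y‖ ≤ ((L:ℝ≥0∞) * (C₃ * ε1)).toReal :=
      lp.norm_le_of_forall_le ENNReal.toReal_nonneg hbound
    have hedist : edist (f x) (f y) ≤ (L:ℝ≥0∞) * (C₃ * ε1) := by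
      rw [edist_dist, dist_eq_norm]
      exact le_trans (ENNReal.ofReal_le_ofReal hnorm)
        (le_of_eq (ENNReal.ofReal_toReal hfinLC))
    refine le_trans hedist ?_
    have h1 : ε1 = volume (D \ A) ^ ((k:ℝ)⁻¹) := by rw [hε1, hE'vol]
    rw [← h1]
    have h2 : ENNReal.ofReal ((C₃.toReal + 1) * (L:ℝ))
        = ENNReal.ofReal (C₃.toReal + 1) * (L:ℝ≥0∞) := by
      rw [ENNReal.ofReal_mul (by positivity), ENNReal.ofReal_coe_nnreal]
    rw [h2]
    have h3 : C₃ ≤ ENNReal.ofReal (C₃.toReal + 1) := by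
      calc C₃ = ENNReal.ofReal C₃.toReal := (ENNReal.ofReal_toReal hC₃top).symm
        _ ≤ _ := ENNReal.ofReal_le_ofReal (by linarith)
    calc (L:ℝ≥0∞) * (C₃ * ε1) = C₃ * ((L:ℝ≥0∞) * ε1) := by ring
      _ ≤ ENNReal.ofReal (C₃.toReal + 1) * ((L:ℝ≥0∞) * ε1) := by gcongr
      _ = ENNReal.ofReal (C₃.toReal + 1) * (L:ℝ≥0∞) * ε1 := by ring

end
end
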